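/- arXiv:1305.4905 — 2 statements merged into one kernel-verified Lean document; each statement's English description precedes it below -/
import Mathlib

section
/- Let D = (V, A) be a finite directed multigraph with a designated node s ∈ V such that deleting any single arc strictly decreases λ(v) for some node v ∈ V (D is link-minimal). Then λ(v) = ρ(v) for every node v ≠ s, i.e., the maximum number of arc-disjoint directed paths from s to v equals the in-degree of v. -/
namespace NCMinor

variable {V A : Type}

/-- `IsArcWalk tl hd u v p` : the list of arcs `p` forms a directed walk from `u` to `v`
in the multigraph with tail map `tl` and head map `hd`. -/
def IsArcWalk (tl hd : A → V) : V → V → List A → Prop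
  | u, v, [] => u = v
  | u, v, a :: p => tl a = u ∧ IsArcWalk tl hd (hd a) v p

/-- `lam tl hd s v` : the maximum number of pairwise arc-disjoint directed paths
from `s` to `v`. -/
noncomputable def lam (tl hd : A → V) (s v : V) : ℕ :=
  sSup {k | ∃ P : Fin k → List A,
    (∀ i, IsArcWalk tl hd s v (P i)) ∧
    ∀ i j : Fin k, i ≠ j → ∀ a, a ∈ P i → a ∉ P j}

/-- in-degree -/
noncomputable def inDeg (hd : A → V) (v : V) : ℕ := {a | hd a = v}.ncard

/-- `cutVal tl hd U` : number of arcs entering the node set `U` from outside. -/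
noncomputable def cutVal (tl hd : A → V) (U : Set V) : ℕ :=
  {a | tl a ∉ U ∧ hd a ∈ U}.ncard

/-- `eta tl hd s u v` : minimum value of a cut separating `{u, v}` from `s`. -/
noncomputable def eta (tl hd : A → V) (s u v : V) : ℕ :=
  sInf {k | ∃ U : Set V, u ∈ U ∧ v ∈ U ∧ s ∉ U ∧ cutVal tl hd U = k}

def Acyclic (tl hd : A → V) : Prop := ∀ v p, IsArcWalk tl hd v v p → p = []

/-- deleting any arc decreases the max-flow to some node. -/
def LinkMinimal (tl hd : A → V) (s : V) : Prop :=
  ∀ a : A, ∃ v : V,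
    lam (fun b : {b : A // b ≠ a} => tl b.1) (fun b => hd b.1) s v < lam tl hd s v

/-- rate 2 is feasible to every receiver, but infeasible after deleting any arc. -/
def TwoMinimal (tl hd : A → V) (s : V) (T : Set V) : Prop :=
  (∀ t ∈ T, 2 ≤ lam tl hd s t) ∧
  ∀ a : A, ∃ t ∈ T,
    lam (fun b : {b : A // b ≠ a} => tl b.1) (fun b => hd b.1) s t < 2

/-- a rate-2 linear coding solution over the field `F`. -/
def IsCodingSolution (tl hd : A → V) (s : V) (T : Set V) {F : Type} [Field F]
    (φ : A → F × F) : Prop :=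
  (∀ a, φ a ≠ 0) ∧
  (∀ a, tl a ≠ s → φ a ∈ Submodule.span F (φ '' {b | hd b = tl a})) ∧
  (∀ t ∈ T, Submodule.span F (φ '' {b | hd b = t}) = ⊤)

/-- generating relation of the subtree decomposition: consecutive arcs through an
in-degree-1 node lie in the same class. -/
def SubtreeRel (tl hd : A → V) (a b : A) : Prop :=
  hd a = tl b ∧ inDeg hd (hd a) = 1

/-- the subtrees: classes of arcs generated by `SubtreeRel`. -/
def Subtrees (tl hd : A → V) : Type := Quot (SubtreeRel tl hd)

/-- the subtree graph: two subtrees are adjacent iff some node of in-degree 2 has one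
incoming arc in each. -/
def subtreeGraph (tl hd : A → V) : SimpleGraph (Subtrees tl hd) where
  Adj x y := x ≠ y ∧ ∃ a b : A,
    Quot.mk _ a = x ∧ Quot.mk _ b = y ∧ hd a = hd b ∧ inDeg hd (hd a) = 2
  symm := by
    constructor
    rintro x y ⟨hxy, a, b, ha, hb, hab, hdeg⟩
    exact ⟨hxy.symm, b, a, hb, ha, hab.symm, hab ▸ hdeg⟩
  loopless := by constructor; rintro x ⟨hxx, -⟩; exact hxx rfl

/-- the underlying (undirected, simple) topology of the network. -/
def topology (tl hd : A → V) : SimpleGraph V where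
  Adj u v := u ≠ v ∧ ∃ a, (tl a = u ∧ hd a = v) ∨ (tl a = v ∧ hd a = u)
  symm := by constructor; rintro u v ⟨huv, a, h⟩; exact ⟨huv.symm, a, h.symm⟩
  loopless := by constructor; rintro u ⟨h, -⟩; exact h rfl

/-- graph minor via branch sets. -/
def IsMinor {W : Type} (M : SimpleGraph W) (G : SimpleGraph V) : Prop :=
  ∃ B : W → Set V,
    (∀ m, (G.induce (B m)).Connected) ∧
    (Pairwise fun m m' => Disjoint (B m) (B m')) ∧
    ∀ m m', M.Adj m m' → ∃ u ∈ B m, ∃ v ∈ B m', G.Adj u v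

/-- `S` is the arc set of an `s`-rooted out-tree. -/
def IsOutTree (tl hd : A → V) (s : V) (S : Set A) : Prop :=
  (∀ a ∈ S, hd a ≠ s) ∧
  Set.InjOn hd S ∧
  ∀ a ∈ S, ∃ p : List A, (∀ b ∈ p, b ∈ S) ∧ IsArcWalk tl hd s (tl a) p

/-- node `v` belongs to the out-tree with root `s` and arc set `S`. -/
def MemTree (tl hd : A → V) (s : V) (S : Set A) (v : V) : Prop :=
  v = s ∨ ∃ a ∈ S, hd a = v ∨ tl a = v

/-- tree decomposition of the graph `G` with host tree `H` and bags `B`. -/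
structure IsTreeDecomp (G : SimpleGraph V) {X : Type} (H : SimpleGraph X)
    (B : X → Set V) : Prop where
  isTree : H.IsTree
  mem_bag : ∀ v, ∃ x, v ∈ B x
  edge_bag : ∀ u v, G.Adj u v → ∃ x, u ∈ B x ∧ v ∈ B x
  bag_connected : ∀ v : V, (H.induce {x | v ∈ B x}).Connected

/-- size of a largest clique. -/
noncomputable def cliqueNumber {W : Type} (G : SimpleGraph W) : ℕ :=
  sSup {n | ∃ t : Finset W, G.IsNClique n t}

end NCMinor

namespace NCMinor


section MengerProof

open Finset

open scoped Classical

variable {V A : Type}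

/-! ### Walk basics -/

@[simp] lemma isArcWalk_nil (tl hd : A → V) (u v : V) :
    IsArcWalk tl hd u v [] ↔ u = v := Iff.rfl

@[simp] lemma isArcWalk_cons (tl hd : A → V) (u v : V) (a : A) (p : List A) :
    IsArcWalk tl hd u v (a :: p) ↔ tl a = u ∧ IsArcWalk tl hd (hd a) v p := Iff.rfl

lemma isArcWalk_append {tl hd : A → V} {q : List A} :
    ∀ {p : List A} {u v w : V}, IsArcWalk tl hd u v p → IsArcWalk tl hd v w q →
      IsArcWalk tl hd u w (p ++ q) := by
  intro p
  induction p with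
  | nil => intro u v w h hq; rw [isArcWalk_nil] at h; simpa [h]
  | cons a r ih =>
    intro u v w h hq
    obtain ⟨ha, hr⟩ := h
    exact ⟨ha, ih hr hq⟩

/-- a walk from outside `X` into `X` contains an arc crossing into `X`. -/
lemma exists_crossing_arc {tl hd : A → V} {X : Set V} :
    ∀ {p : List A} {u v : V}, IsArcWalk tl hd u v p → u ∉ X → v ∈ X →
      ∃ a ∈ p, tl a ∉ X ∧ hd a ∈ X := by
  intro p
  induction p with
  | nil => intro u v h hu hv; exact absurd (h ▸ hv) hu
  | cons a q ih =>
    intro u v h hu hv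
    obtain ⟨ha, hq⟩ := h
    by_cases hX : hd a ∈ X
    · exact ⟨a, List.mem_cons_self .., ha ▸ hu, hX⟩
    · obtain ⟨b, hb, h1, h2⟩ := ih hq hX hv
      exact ⟨b, List.mem_cons_of_mem _ hb, h1, h2⟩

lemma getLast_head {tl hd : A → V} :
    ∀ {p : List A} {u v : V} (hne : p ≠ []), IsArcWalk tl hd u v p →
      hd (p.getLast hne) = v := by
  intro p
  induction p with
  | nil => intro u v hne; exact absurd rfl hne
  | cons a q ih =>
    intro u v hne h
    obtain ⟨ha, hq⟩ := h
    rcases q with _ | ⟨b, r⟩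
    · exact hq
    · rw [List.getLast_cons (by simp)]
      exact ih (by simp) hq

/-! ### Balance of a set of arcs -/

/-- the contribution of arc `a` to the flow balance at `x`. -/
noncomputable def wgt (tl hd : A → V) (x : V) (a : A) : ℤ :=
  (if hd a = x then 1 else 0) - (if tl a = x then 1 else 0)

/-- flow balance (inflow minus outflow) of the arc set `F` at node `x`. -/
noncomputable def bal (tl hd : A → V) (F : Finset A) (x : V) : ℤ :=
  ∑ a ∈ F, wgt tl hd x a

lemma bal_empty (tl hd : A → V) (x : V) : bal tl hd ∅ x = 0 := by
  simp [bal]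

lemma bal_insert {tl hd : A → V} {F : Finset A} {a : A} (ha : a ∉ F) (x : V) :
    bal tl hd (insert a F) x = bal tl hd F x + wgt tl hd x a := by
  simp only [bal, Finset.sum_insert ha]; ring

lemma bal_erase {tl hd : A → V} {F : Finset A} {a : A} (ha : a ∈ F) (x : V) :
    bal tl hd (F.erase a) x = bal tl hd F x - wgt tl hd x a := by
  have h := Finset.add_sum_erase F (wgt tl hd x) ha
  rw [bal, bal, ← h]; ring

lemma bal_sdiff {tl hd : A → V} {F S : Finset A} (h : S ⊆ F) (x : V) :
    bal tl hd (F \ S) x = bal tl hd F x - bal tl hd S x := by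
  have := Finset.sum_sdiff (f := wgt tl hd x) h
  rw [bal, bal, bal, ← this]; ring

lemma bal_sum_univ [Fintype V] (tl hd : A → V) (F : Finset A) :
    ∑ x : V, bal tl hd F x = 0 := by
  simp only [bal, wgt]
  rw [Finset.sum_comm]
  apply Finset.sum_eq_zero
  intro a _
  rw [Finset.sum_sub_distrib, Finset.sum_ite_eq, Finset.sum_ite_eq]
  simp

/-- the balance of the arc set of a (nodup) walk. -/
lemma bal_walk {tl hd : A → V} :
    ∀ {p : List A} {u v : V}, IsArcWalk tl hd u v p → p.Nodup → ∀ x,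
      bal tl hd p.toFinset x =
        (if x = v then 1 else 0) - (if x = u then 1 else 0) := by
  intro p
  induction p with
  | nil => intro u v h _ x; rw [isArcWalk_nil] at h; simp [h, bal]
  | cons a q ih =>
    intro u v h hnd x
    obtain ⟨ha, hq⟩ := h
    obtain ⟨hna, hndq⟩ := List.nodup_cons.mp hnd
    have hnaf : a ∉ q.toFinset := by simpa using hna
    rw [List.toFinset_cons, bal_insert hnaf, ih hq hndq]
    subst ha
    simp only [wgt]
    have h1 : (if hd a = x then (1:ℤ) else 0) = (if x = hd a then 1 else 0) := by
      simp [eq_comm]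
    have h2 : (if tl a = x then (1:ℤ) else 0) = (if x = tl a then 1 else 0) := by
      simp [eq_comm]
    rw [h1, h2]
    ring

/-- existence of a positive-balance sink reachable from a negative-balance node. -/
lemma exists_walk_of_bal_neg {tl hd : A → V} (F : Finset A) :
    ∀ x : V, bal tl hd F x < 0 →
      ∃ (y : V) (p : List A), p.Nodup ∧ (∀ b ∈ p, b ∈ F) ∧ IsArcWalk tl hd x y p ∧
        0 < bal tl hd F y := by
  induction F using Finset.strongInduction with
  | _ F IH =>
    intro x hx
    have hex : ∃ a ∈ F, tl a = x := by
      by_contra hno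
      push_neg at hno
      refine absurd (Finset.sum_nonneg ?_) (not_le.mpr hx)
      intro a ha
      simp only [wgt]
      have := hno a ha
      simp [this]
      positivity
    obtain ⟨a, haF, hta⟩ := hex
    by_cases hpos : 0 < bal tl hd F (hd a)
    · exact ⟨hd a, [a], List.nodup_singleton a, by simpa using haF,
        ⟨hta, rfl⟩, hpos⟩
    · push_neg at hpos
      have herase : bal tl hd (F.erase a) (hd a) < 0 := by
        have hb := bal_erase (tl := tl) (hd := hd) haF (hd a)
        by_cases hsl : tl a = hd a
        · have hx' : hd a = x := hsl ▸ hta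
          have hw : wgt tl hd (hd a) a = 0 := by simp [wgt, hsl]
          rw [hb, hw, hx']
          linarith [hx]
        · have hw : wgt tl hd (hd a) a = 1 := by simp [wgt, hsl]
          rw [hb, hw]
          linarith [hpos]
      obtain ⟨y, q, hnd, hsub, hwalk, hy⟩ :=
        IH (F.erase a) (Finset.erase_ssubset haF) (hd a) herase
      have haq : a ∉ q := fun h => (Finset.ne_of_mem_erase (hsub a h)) rfl
      refine ⟨y, a :: q, List.nodup_cons.mpr ⟨haq, hnd⟩,
        ?_, ⟨hta, hwalk⟩, ?_⟩
      · intro b hb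
        rcases List.mem_cons.mp hb with h | h
        · exact h ▸ haF
        · exact Finset.mem_of_mem_erase (hsub b h)
      · have hbal : bal tl hd F y = bal tl hd (F.erase a) y + wgt tl hd y a := by
          rw [bal_erase haF]; ring
        rw [hbal]
        simp only [wgt]
        by_cases h1 : tl a = y
        · -- then y = x; derive a contradiction with hy
          exfalso
          have hyx : y = x := h1 ▸ hta
          have : bal tl hd (F.erase a) x = bal tl hd F x - wgt tl hd x a := bal_erase haF x
          rw [hyx] at hy
          rw [this] at hy
          simp only [wgt, if_pos hta] at hy
          by_cases h2 : hd a = x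
          · rw [if_pos h2] at hy; omega
          · rw [if_neg h2] at hy; omega
        · simp only [if_neg h1]
          by_cases h2 : hd a = y <;> simp [h2] <;> omega


/-- flow decomposition: a flow of value `n` contains `n` arc-disjoint walks. -/
lemma flow_decomp [Fintype V] {tl hd : A → V} (s v : V) (hvs : v ≠ s) :
    ∀ (n : ℕ) (F : Finset A), (∀ x, x ≠ s → x ≠ v → bal tl hd F x = 0) →
      bal tl hd F v = n →
      ∃ P : Fin n → List A, (∀ i, IsArcWalk tl hd s v (P i)) ∧
        (∀ i, ∀ b ∈ P i, b ∈ F) ∧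
        (∀ i j, i ≠ j → ∀ b, b ∈ P i → b ∉ P j) := by
  intro n
  induction n with
  | zero =>
    intro F _ _
    exact ⟨fun _ => [], fun i => i.elim0, fun i => i.elim0, fun i => i.elim0⟩
  | succ n ih =>
    intro F hcons hval
    -- the balance at `s` is negative
    have hpair : bal tl hd F s + bal tl hd F v = 0 := by
      have hsub : ({s, v} : Finset V) ⊆ Finset.univ := Finset.subset_univ _
      have hsplit := Finset.sum_sdiff (f := bal tl hd F) hsub
      have hrest : ∑ x ∈ Finset.univ \ {s, v}, bal tl hd F x = 0 := by
        apply Finset.sum_eq_zero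
        intro x hxmem
        rw [Finset.mem_sdiff, Finset.mem_insert, Finset.mem_singleton] at hxmem
        push_neg at hxmem
        exact hcons x hxmem.2.1 hxmem.2.2
      have hpairsum : ∑ x ∈ ({s, v} : Finset V), bal tl hd F x
          = bal tl hd F s + bal tl hd F v := Finset.sum_pair (Ne.symm hvs)
      rw [hrest, hpairsum, bal_sum_univ] at hsplit
      linarith [hsplit]
    have hneg : bal tl hd F s < 0 := by
      rw [hval] at hpair
      omega
    obtain ⟨y, p, hnd, hsub, hwalk, hy⟩ := exists_walk_of_bal_neg F s hneg
    have hyv : y = v := by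
      by_contra hne
      rcases eq_or_ne y s with h | h
      · rw [h] at hy; linarith
      · rw [hcons y h hne] at hy; exact absurd hy (lt_irrefl 0)
    rw [hyv] at hwalk
    -- remove the walk from the flow
    set F' := F \ p.toFinset with hF'
    have hpf : p.toFinset ⊆ F := by
      intro b hb
      exact hsub b (List.mem_toFinset.mp hb)
    have hbal' : ∀ x, bal tl hd F' x =
        bal tl hd F x - ((if x = v then 1 else 0) - (if x = s then 1 else 0)) := by
      intro x
      rw [hF', bal_sdiff hpf, bal_walk hwalk hnd]
    have hcons' : ∀ x, x ≠ s → x ≠ v → bal tl hd F' x = 0 := by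
      intro x hxs hxv
      rw [hbal' x, hcons x hxs hxv, if_neg hxv, if_neg hxs]
      ring
    have hval' : bal tl hd F' v = n := by
      rw [hbal' v, hval, if_pos rfl, if_neg hvs]
      push_cast
      ring
    obtain ⟨P, hPwalk, hPF, hPdis⟩ := ih F' hcons' hval'
    refine ⟨Fin.cons p P, ?_, ?_, ?_⟩
    · intro i
      refine Fin.cases ?_ ?_ i
      · simpa using hwalk
      · intro j; simpa using hPwalk j
    · intro i
      refine Fin.cases ?_ ?_ i
      · simpa using hsub
      · intro j
        simp only [Fin.cons_succ]
        intro b hb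
        exact (Finset.mem_sdiff.mp (hPF j b hb)).1
    · intro i j hij b hbi hbj
      have key : ∀ (k : Fin n) (c : A), c ∈ p → c ∉ P k := by
        intro k c hc hck
        have := hPF k c hck
        rw [hF', Finset.mem_sdiff] at this
        exact this.2 (List.mem_toFinset.mpr hc)
      rcases Fin.eq_zero_or_eq_succ i with hi | ⟨i', rfl⟩ <;>
        rcases Fin.eq_zero_or_eq_succ j with hj | ⟨j', rfl⟩
      · exact hij (by rw [hi, hj])
      · subst hi
        rw [Fin.cons_zero] at hbi
        rw [Fin.cons_succ] at hbj
        exact key j' b hbi hbj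
      · subst hj
        rw [Fin.cons_succ] at hbi
        rw [Fin.cons_zero] at hbj
        exact key i' b hbj hbi
      · rw [Fin.cons_succ] at hbi hbj
        have hij' : i' ≠ j' := fun h => hij (by rw [h])
        exact hPdis i' j' hij' b hbi hbj

/-! ### Residual walks and augmentation -/

/-- start node of a residual step (`true` = forward). -/
def rsrc (tl hd : A → V) (st : A × Bool) : V := if st.2 then tl st.1 else hd st.1

/-- end node of a residual step. -/
def rdst (tl hd : A → V) (st : A × Bool) : V := if st.2 then hd st.1 else tl st.1

/-- a residual step is admissible w.r.t. the flow `F`. -/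
def ROk (F : Finset A) (st : A × Bool) : Prop := if st.2 then st.1 ∉ F else st.1 ∈ F

/-- residual walk. -/
def RWalk (tl hd : A → V) (F : Finset A) : V → V → List (A × Bool) → Prop
  | u, v, [] => u = v
  | u, v, st :: p => ROk F st ∧ rsrc tl hd st = u ∧ RWalk tl hd F (rdst tl hd st) v p

@[simp] lemma rwalk_nil {tl hd : A → V} {F : Finset A} {u v : V} :
    RWalk tl hd F u v [] ↔ u = v := Iff.rfl

@[simp] lemma rwalk_cons {tl hd : A → V} {F : Finset A} {u v : V} {st : A × Bool}
    {p : List (A × Bool)} :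
    RWalk tl hd F u v (st :: p) ↔
      ROk F st ∧ rsrc tl hd st = u ∧ RWalk tl hd F (rdst tl hd st) v p := Iff.rfl

lemma rwalk_append {tl hd : A → V} {F : Finset A} {q : List (A × Bool)} :
    ∀ {p : List (A × Bool)} {u v w : V}, RWalk tl hd F u v p → RWalk tl hd F v w q →
      RWalk tl hd F u w (p ++ q) := by
  intro p
  induction p with
  | nil => intro u v w h hq; rw [rwalk_nil] at h; simpa [h]
  | cons st r ih =>
    intro u v w h hq
    obtain ⟨h1, h2, h3⟩ := h
    exact ⟨h1, h2, ih h3 hq⟩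

lemma rwalk_split {tl hd : A → V} {F : Finset A} {q : List (A × Bool)} :
    ∀ {p : List (A × Bool)} {u v : V}, RWalk tl hd F u v (p ++ q) →
      ∃ m, RWalk tl hd F u m p ∧ RWalk tl hd F m v q := by
  intro p
  induction p with
  | nil => intro u v h; exact ⟨u, rfl, h⟩
  | cons st r ih =>
    intro u v h
    obtain ⟨h1, h2, h3⟩ := h
    obtain ⟨m, hm1, hm2⟩ := ih h3
    exact ⟨m, ⟨h1, h2, hm1⟩, hm2⟩

lemma rwalk_ok {tl hd : A → V} {F : Finset A} :
    ∀ {p : List (A × Bool)} {u v : V}, RWalk tl hd F u v p → ∀ st ∈ p, ROk F st := by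
  intro p
  induction p with
  | nil => intro u v _ st hst; exact absurd hst List.not_mem_nil
  | cons st' r ih =>
    intro u v h st hst
    obtain ⟨h1, _, h3⟩ := h
    rcases List.mem_cons.mp hst with h | h
    · exact h ▸ h1
    · exact ih h3 st h

/-- a residual walk can be trimmed to one visiting each arc at most once. -/
lemma rwalk_trim {tl hd : A → V} {F : Finset A} :
    ∀ {p : List (A × Bool)} {u v : V}, RWalk tl hd F u v p →
      ∃ q, RWalk tl hd F u v q ∧ (q.map Prod.fst).Nodup ∧ ∀ st ∈ q, st ∈ p := by
  intro p
  induction p with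
  | nil => intro u v h; exact ⟨[], h, List.nodup_nil, fun st hst => absurd hst List.not_mem_nil⟩
  | cons st r ih =>
    intro u v h
    obtain ⟨h1, h2, h3⟩ := h
    obtain ⟨q', hq'w, hq'nd, hq'sub⟩ := ih h3
    by_cases hmem : st.1 ∈ q'.map Prod.fst
    · obtain ⟨st', hst'q, hst'1⟩ := List.mem_map.mp hmem
      have hstst : st' = st := by
        have hok' : ROk F st' := rwalk_ok hq'w st' hst'q
        have hb2 : st'.2 = st.2 := by
          cases hb : st.2 <;> cases hb' : st'.2 <;> try rfl
          · exfalso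
            rw [ROk, hb] at h1
            rw [ROk, hb', hst'1] at hok'
            simp only [Bool.false_eq_true, if_false, if_true] at h1 hok'
            exact hok' h1
          · exfalso
            rw [ROk, hb] at h1
            rw [ROk, hb', hst'1] at hok'
            simp only [Bool.false_eq_true, if_false, if_true] at h1 hok'
            exact h1 hok'
        exact Prod.ext hst'1 hb2
      subst hstst
      obtain ⟨l₁, l₂, hq'eq⟩ := List.append_of_mem hst'q
      rw [hq'eq] at hq'w hq'nd
      obtain ⟨m, _, hm2⟩ := rwalk_split hq'w
      obtain ⟨hok2, hsrc2, htail⟩ := hm2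
      refine ⟨st' :: l₂, ⟨h1, h2, htail⟩, ?_, ?_⟩
      · have hsl : ((st' :: l₂).map Prod.fst).Sublist ((l₁ ++ st' :: l₂).map Prod.fst) :=
          (List.sublist_append_right l₁ (st' :: l₂)).map Prod.fst
        exact hsl.nodup hq'nd
      · intro x hx
        rcases List.mem_cons.mp hx with hh | hh
        · exact hh ▸ List.mem_cons_self ..
        · refine List.mem_cons_of_mem _ (hq'sub x ?_)
          rw [hq'eq]
          simp [hh]
    · refine ⟨st :: q', ⟨h1, h2, hq'w⟩, ?_, ?_⟩
      · rw [List.map_cons]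
        exact List.nodup_cons.mpr ⟨hmem, hq'nd⟩
      · intro x hx
        rcases List.mem_cons.mp hx with hh | hh
        · exact hh ▸ List.mem_cons_self ..
        · exact List.mem_cons_of_mem _ (hq'sub x hh)

/-- augment the arc set `G` along a list of residual steps. -/
noncomputable def applyAug (G : Finset A) : List (A × Bool) → Finset A
  | [] => G
  | st :: p => applyAug (if st.1 ∈ G then G.erase st.1 else insert st.1 G) p

lemma bal_applyAug {tl hd : A → V} {F : Finset A} :
    ∀ {p : List (A × Bool)} {u v : V} (G : Finset A), RWalk tl hd F u v p →
      (p.map Prod.fst).Nodup → (∀ st ∈ p, (st.1 ∈ G ↔ st.1 ∈ F)) → ∀ x,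
      bal tl hd (applyAug G p) x =
        bal tl hd G x + ((if x = v then 1 else 0) - (if x = u then 1 else 0)) := by
  intro p
  induction p with
  | nil =>
    intro u v G h _ _ x
    rw [rwalk_nil] at h
    subst h
    simp [applyAug]
  | cons st q ih =>
    intro u v G h hnd hcst x
    obtain ⟨h1, h2, h3⟩ := h
    rw [List.map_cons, List.nodup_cons] at hnd
    obtain ⟨hst1, hndq⟩ := hnd
    set G' := if st.1 ∈ G then G.erase st.1 else insert st.1 G with hG'
    have happ : applyAug G (st :: q) = applyAug G' q := by
      rw [applyAug]
    have hcst' : ∀ st' ∈ q, (st'.1 ∈ G' ↔ st'.1 ∈ F) := by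
      intro st' hst'
      have hne : st'.1 ≠ st.1 := fun hh => hst1 (hh ▸ List.mem_map_of_mem (f := Prod.fst) hst')
      have hiffq := hcst st' (List.mem_cons_of_mem st hst')
      rw [hG']
      split
      · rw [Finset.mem_erase]
        constructor
        · intro hh; exact hiffq.mp hh.2
        · intro hh; exact ⟨hne, hiffq.mpr hh⟩
      · rw [Finset.mem_insert]
        constructor
        · intro hh
          rcases hh with hh | hh
          · exact absurd hh hne
          · exact hiffq.mp hh
        · intro hh; exact Or.inr (hiffq.mpr hh)
    have hkey : bal tl hd G' x = bal tl hd G x +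
        ((if x = rdst tl hd st then 1 else 0) - (if x = rsrc tl hd st then 1 else 0)) := by
      have hiff := hcst st (List.mem_cons_self ..)
      have e1 : (if hd st.1 = x then (1:ℤ) else 0) = (if x = hd st.1 then 1 else 0) := by
        simp [eq_comm]
      have e2 : (if tl st.1 = x then (1:ℤ) else 0) = (if x = tl st.1 then 1 else 0) := by
        simp [eq_comm]
      cases hb : st.2
      · -- backward step: st.1 ∈ F, so st.1 ∈ G, erase it
        have hin : st.1 ∈ F := by
          rw [ROk, hb] at h1
          simpa only [Bool.false_eq_true, if_false] using h1
        have hinG : st.1 ∈ G := hiff.mpr hin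
        have hrd : rdst tl hd st = tl st.1 := by simp [rdst, hb]
        have hrs : rsrc tl hd st = hd st.1 := by simp [rsrc, hb]
        rw [hG', if_pos hinG, bal_erase hinG, hrd, hrs]
        simp only [wgt]
        rw [e1, e2]
        ring
      · -- forward step: st.1 ∉ F, so st.1 ∉ G, insert it
        have hnin : st.1 ∉ F := by
          rw [ROk, hb] at h1
          simpa only [if_true] using h1
        have hninG : st.1 ∉ G := fun hh => hnin (hiff.mp hh)
        have hrd : rdst tl hd st = hd st.1 := by simp [rdst, hb]
        have hrs : rsrc tl hd st = tl st.1 := by simp [rsrc, hb]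
        rw [hG', if_neg hninG, bal_insert hninG, hrd, hrs]
        simp only [wgt]
        rw [e1, e2]
    rw [happ, ih G' h3 hndq hcst' x, hkey, h2]
    ring

/-! ### Cuts and max-flow-min-cut -/

/-- cut value as a `Finset` cardinality. -/
noncomputable def cutF [Fintype A] (tl hd : A → V) (X : Set V) : ℕ :=
  (Finset.univ.filter (fun a => tl a ∉ X ∧ hd a ∈ X)).card

lemma cutVal_eq_cutF [Fintype A] (tl hd : A → V) (X : Set V) :
    cutVal tl hd X = cutF tl hd X := by
  rw [cutVal, cutF]
  rw [Set.ncard_eq_toFinset_card']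
  congr 1
  ext a
  simp

lemma inDeg_eq_card [Fintype A] (hd : A → V) (v : V) :
    inDeg hd v = (Finset.univ.filter (fun a => hd a = v)).card := by
  rw [inDeg, Set.ncard_eq_toFinset_card']
  congr 1
  ext a
  simp

/-- max-flow achieving the min-cut bound. -/
lemma exists_flow [Fintype V] [Fintype A] (tl hd : A → V) (s v : V) (hvs : v ≠ s) :
    ∀ n : ℕ, (∀ X : Set V, v ∈ X → s ∉ X → n ≤ cutF tl hd X) →
    ∃ F : Finset A, (∀ x, x ≠ s → x ≠ v → bal tl hd F x = 0) ∧ bal tl hd F v = n := by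
  intro n
  induction n with
  | zero => intro _; exact ⟨∅, fun x _ _ => bal_empty tl hd x, by simp [bal_empty]⟩
  | succ n ih =>
    intro hcut
    obtain ⟨F, hcons, hval⟩ := ih (fun X hv hs => le_trans (Nat.le_succ n) (hcut X hv hs))
    have hreach : ∃ p, RWalk tl hd F s v p := by
      by_contra hno
      set X : Set V := {x | ¬ ∃ p, RWalk tl hd F s x p} with hX
      have hsX : s ∉ X := fun h => h ⟨[], rfl⟩
      have hvX : v ∈ X := hno
      have hcross : ∀ a : A, tl a ∉ X → hd a ∈ X → a ∈ F := by
        intro a hta hha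
        by_contra haF
        obtain ⟨p, hp⟩ := not_not.mp hta
        refine hha ⟨p ++ [(a, true)], rwalk_append hp ?_⟩
        refine ⟨?_, ?_, ?_⟩
        · simp [ROk, haF]
        · simp [rsrc]
        · simp [rdst, rwalk_nil]
      have hleave : ∀ a ∈ F, hd a ∉ X → tl a ∉ X := by
        intro a haF hha
        obtain ⟨p, hp⟩ := not_not.mp hha
        refine not_not.mpr ⟨p ++ [(a, false)], rwalk_append hp ?_⟩
        refine ⟨?_, ?_, ?_⟩
        · simp [ROk, haF]
        · simp [rsrc]
        · simp [rdst, rwalk_nil]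
      have hsum1 : ∑ x ∈ Finset.univ.filter (· ∈ X), bal tl hd F x = bal tl hd F v := by
        apply Finset.sum_eq_single_of_mem
        · simp [hvX]
        · intro x hx hne
          rw [Finset.mem_filter] at hx
          exact hcons x (fun hh => hsX (hh ▸ hx.2)) hne
      have hsum2 : ∑ x ∈ Finset.univ.filter (· ∈ X), bal tl hd F x =
          ((F.filter (fun a => tl a ∉ X ∧ hd a ∈ X)).card : ℤ) -
          ((F.filter (fun a => tl a ∈ X ∧ hd a ∉ X)).card : ℤ) := by
        have step1 : ∑ x ∈ Finset.univ.filter (· ∈ X), bal tl hd F x =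
            ∑ a ∈ F, ((if hd a ∈ X then (1:ℤ) else 0) - (if tl a ∈ X then 1 else 0)) := by
          rw [show (∑ x ∈ Finset.univ.filter (· ∈ X), bal tl hd F x) =
              ∑ a ∈ F, ∑ x ∈ Finset.univ.filter (· ∈ X), wgt tl hd x a from by
            rw [← Finset.sum_comm]; rfl]
          apply Finset.sum_congr rfl
          intro a _
          simp only [wgt]
          rw [Finset.sum_sub_distrib, Finset.sum_ite_eq, Finset.sum_ite_eq]
          simp
        rw [step1]
        have step2 : ∀ a ∈ F, ((if hd a ∈ X then (1:ℤ) else 0) - (if tl a ∈ X then 1 else 0)) =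
            ((if tl a ∉ X ∧ hd a ∈ X then (1:ℤ) else 0) -
             (if tl a ∈ X ∧ hd a ∉ X then (1:ℤ) else 0)) := by
          intro a _
          by_cases h1 : tl a ∈ X <;> by_cases h2 : hd a ∈ X <;> simp [h1, h2]
        rw [Finset.sum_congr rfl step2, Finset.sum_sub_distrib, Finset.sum_boole,
          Finset.sum_boole]
      have hempt : F.filter (fun a => tl a ∈ X ∧ hd a ∉ X) = ∅ := by
        apply Finset.filter_eq_empty_iff.mpr
        intro a haF hh
        exact (hleave a haF hh.2) hh.1
      have hfull : Finset.univ.filter (fun a => tl a ∉ X ∧ hd a ∈ X) =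
          F.filter (fun a => tl a ∉ X ∧ hd a ∈ X) := by
        ext a
        simp only [Finset.mem_filter, Finset.mem_univ, true_and]
        constructor
        · intro hh; exact ⟨hcross a hh.1 hh.2, hh⟩
        · intro hh; exact hh.2
      have hfull2 : cutF tl hd X = (F.filter (fun a => tl a ∉ X ∧ hd a ∈ X)).card := by
        rw [cutF]
        apply Finset.card_bij (fun a _ => a)
        · intro a ha
          simp only [Finset.mem_filter] at ha ⊢
          exact ⟨hcross a ha.2.1 ha.2.2, ha.2⟩
        · intro a _ b _ h
          exact h
        · intro b hb
          simp only [Finset.mem_filter] at hb ⊢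
          exact ⟨b, ⟨Finset.mem_univ b, hb.2⟩, rfl⟩
      have hcutn : (cutF tl hd X : ℤ) = (n : ℤ) := by
        rw [hfull2]
        rw [hsum1, hval] at hsum2
        rw [hempt] at hsum2
        simp at hsum2
        omega
      have := hcut X hvX hsX
      omega
    obtain ⟨p0, hp0⟩ := hreach
    obtain ⟨p, hpw, hpnd, _⟩ := rwalk_trim hp0
    have hb := bal_applyAug (F := F) F hpw hpnd (fun st _ => Iff.rfl)
    refine ⟨applyAug F p, ?_, ?_⟩
    · intro x hxs hxv
      rw [hb x, hcons x hxs hxv, if_neg hxv, if_neg hxs]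
      ring
    · rw [hb v, hval, if_pos rfl, if_neg hvs]
      push_cast
      ring

/-! ### The `lam` layer -/

/-- feasible sizes of arc-disjoint path packs. -/
def packSet (tl hd : A → V) (s v : V) : Set ℕ :=
  {k | ∃ P : Fin k → List A,
    (∀ i, IsArcWalk tl hd s v (P i)) ∧
    ∀ i j : Fin k, i ≠ j → ∀ a, a ∈ P i → a ∉ P j}

lemma lam_def (tl hd : A → V) (s v : V) : lam tl hd s v = sSup (packSet tl hd s v) := rfl

lemma zero_mem_packSet (tl hd : A → V) (s v : V) : 0 ∈ packSet tl hd s v :=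
  ⟨fun i => i.elim0, fun i => i.elim0, fun i => i.elim0⟩

lemma packSet_le_inDeg [Fintype A] {tl hd : A → V} {s v : V} (hvs : v ≠ s) {k : ℕ}
    (hk : k ∈ packSet tl hd s v) : k ≤ inDeg hd v := by
  obtain ⟨P, hw, hdis⟩ := hk
  have hne : ∀ i, P i ≠ [] := by
    intro i h
    have := hw i
    rw [h, isArcWalk_nil] at this
    exact hvs this.symm
  rw [inDeg_eq_card]
  calc k = (Finset.univ : Finset (Fin k)).card := by simp
    _ ≤ _ := by
      apply Finset.card_le_card_of_injOn (fun i : Fin k => (P i).getLast (hne i))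
      · intro i _
        simp only [Finset.mem_filter, Finset.mem_univ, true_and]
        simpa using getLast_head (hne i) (hw i)
      · intro i _ j _ heq
        by_contra hij
        refine hdis i j hij ((P i).getLast (hne i)) (List.getLast_mem (hne i)) ?_
        have heq' : (P i).getLast (hne i) = (P j).getLast (hne j) := heq
        rw [heq']
        exact List.getLast_mem (hne j)

lemma bddAbove_packSet [Fintype A] {tl hd : A → V} {s v : V} (hvs : v ≠ s) :
    BddAbove (packSet tl hd s v) :=
  ⟨inDeg hd v, fun _ hk => packSet_le_inDeg hvs hk⟩

lemma lam_le_inDeg [Fintype A] {tl hd : A → V} {s v : V} (hvs : v ≠ s) :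
    lam tl hd s v ≤ inDeg hd v :=
  csSup_le ⟨0, zero_mem_packSet tl hd s v⟩ (fun _ hk => packSet_le_inDeg hvs hk)

lemma lam_mem_packSet [Fintype A] {tl hd : A → V} {s v : V} (hvs : v ≠ s) :
    lam tl hd s v ∈ packSet tl hd s v :=
  Nat.sSup_mem ⟨0, zero_mem_packSet tl hd s v⟩ (bddAbove_packSet hvs)

lemma le_lam [Fintype A] {tl hd : A → V} {s v : V} (hvs : v ≠ s) {k : ℕ}
    (hk : k ∈ packSet tl hd s v) : k ≤ lam tl hd s v :=
  le_csSup (bddAbove_packSet hvs) hk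

/-- weak duality: any pack size is at most any cut value. -/
lemma packSet_le_cutF [Fintype A] {tl hd : A → V} {s v : V} {X : Set V}
    (hvX : v ∈ X) (hsX : s ∉ X) {k : ℕ} (hk : k ∈ packSet tl hd s v) :
    k ≤ cutF tl hd X := by
  obtain ⟨P, hw, hdis⟩ := hk
  choose f hf1 hf2 hf3 using fun i : Fin k => exists_crossing_arc (hw i) hsX hvX
  calc k = (Finset.univ : Finset (Fin k)).card := by simp
    _ ≤ _ := by
      apply Finset.card_le_card_of_injOn f
      · intro i _
        simp only [Finset.mem_coe, Finset.mem_filter, Finset.mem_univ, true_and]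
        exact ⟨hf2 i, hf3 i⟩
      · intro i _ j _ heq
        by_contra hij
        exact hdis i j hij (f i) (hf1 i) (heq ▸ hf1 j)

lemma lam_le_cutF [Fintype A] {tl hd : A → V} {s v : V} {X : Set V}
    (hvX : v ∈ X) (hsX : s ∉ X) : lam tl hd s v ≤ cutF tl hd X := by
  have hvs : v ≠ s := fun h => hsX (h ▸ hvX)
  exact packSet_le_cutF hvX hsX (lam_mem_packSet hvs)

lemma lam_self (tl hd : A → V) (s : V) : lam tl hd s s = 0 := by
  have huniv : packSet tl hd s s = Set.univ := by
    ext k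
    simp only [Set.mem_univ, iff_true]
    exact ⟨fun _ => [], fun i => rfl, fun i j _ a ha => absurd ha List.not_mem_nil⟩
  have hnb : ¬ BddAbove (packSet tl hd s s) := by
    rw [huniv]
    intro ⟨b, hb⟩
    have := hb (Set.mem_univ (b + 1))
    omega
  rw [lam_def, csSup_of_not_bddAbove hnb, csSup_empty]
  rfl

/-- min-cut lower bound on the flow (hard direction of max-flow-min-cut). -/
lemma le_lam_of_cut_bound [Fintype V] [Fintype A] {tl hd : A → V} {s v : V}
    (hvs : v ≠ s) {n : ℕ} (h : ∀ X : Set V, v ∈ X → s ∉ X → n ≤ cutF tl hd X) :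
    n ≤ lam tl hd s v := by
  obtain ⟨F, hcons, hval⟩ := exists_flow tl hd s v hvs n h
  obtain ⟨P, hw, _, hdis⟩ := flow_decomp s v hvs n F hcons hval
  exact le_lam hvs ⟨P, hw, hdis⟩

/-- there is a cut whose value equals the max-flow. -/
lemma exists_tight_cut [Fintype V] [Fintype A] {tl hd : A → V} {s v : V}
    (hvs : v ≠ s) : ∃ X : Set V, v ∈ X ∧ s ∉ X ∧ cutF tl hd X = lam tl hd s v := by
  set S : Set ℕ := {k | ∃ X : Set V, v ∈ X ∧ s ∉ X ∧ cutF tl hd X = k} with hS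
  have hSne : ({v} : Set V) ∈ Set.univ ∧ True := ⟨trivial, trivial⟩
  have hmem : cutF tl hd {v} ∈ S := ⟨{v}, rfl, fun h => hvs (Set.mem_singleton_iff.mp h).symm, rfl⟩
  have hinf := Nat.sInf_mem (Set.nonempty_of_mem hmem)
  obtain ⟨X0, hvX0, hsX0, hX0⟩ := hinf
  refine ⟨X0, hvX0, hsX0, ?_⟩
  have h1 : lam tl hd s v ≤ cutF tl hd X0 := lam_le_cutF hvX0 hsX0
  have h2 : sInf S ≤ lam tl hd s v := by
    apply le_lam_of_cut_bound hvs
    intro X hvX hsX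
    exact Nat.sInf_le ⟨X, hvX, hsX, rfl⟩
  omega

/-! ### Submodularity and arc deletion -/

lemma cutF_submodular [Fintype A] (tl hd : A → V) (U W : Set V) :
    cutF tl hd (U ∩ W) + cutF tl hd (U ∪ W) ≤ cutF tl hd U + cutF tl hd W := by
  simp only [cutF, Finset.card_filter]
  rw [← Finset.sum_add_distrib, ← Finset.sum_add_distrib]
  apply Finset.sum_le_sum
  intro a _
  by_cases h1 : tl a ∈ U <;> by_cases h2 : tl a ∈ W <;>
    by_cases h3 : hd a ∈ U <;> by_cases h4 : hd a ∈ W <;>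
    simp [Set.mem_inter_iff, Set.mem_union, h1, h2, h3, h4]

lemma cutF_delete [Fintype A] (tl hd : A → V) (a : A)
    [Fintype {b : A // b ≠ a}] (X : Set V) :
    cutF (fun b : {b : A // b ≠ a} => tl b.1) (fun b => hd b.1) X
      + (if tl a ∉ X ∧ hd a ∈ X then 1 else 0) = cutF tl hd X := by
  have h1 : cutF (fun b : {b : A // b ≠ a} => tl b.1) (fun b => hd b.1) X
      = ((Finset.univ.filter (fun b => tl b ∉ X ∧ hd b ∈ X)).erase a).card := by
    rw [cutF]
    apply Finset.card_bij (fun (b : {b : A // b ≠ a}) _ => b.1)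
    · intro b hb
      rw [Finset.mem_filter] at hb
      rw [Finset.mem_erase, Finset.mem_filter]
      exact ⟨b.2, Finset.mem_univ _, hb.2⟩
    · intro b _ c _ h
      exact Subtype.ext h
    · intro c hc
      rw [Finset.mem_erase, Finset.mem_filter] at hc
      exact ⟨⟨c, hc.1⟩, by rw [Finset.mem_filter]; exact ⟨Finset.mem_univ _, hc.2.2⟩, rfl⟩
  rw [h1, cutF]
  by_cases hcr : tl a ∉ X ∧ hd a ∈ X
  · rw [if_pos hcr]
    have hmem : a ∈ Finset.univ.filter (fun b => tl b ∉ X ∧ hd b ∈ X) := by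
      rw [Finset.mem_filter]; exact ⟨Finset.mem_univ _, hcr⟩
    rw [Finset.card_erase_of_mem hmem]
    have : 0 < (Finset.univ.filter (fun b => tl b ∉ X ∧ hd b ∈ X)).card :=
      Finset.card_pos.mpr ⟨a, hmem⟩
    omega
  · rw [if_neg hcr]
    have hnm : a ∉ Finset.univ.filter (fun b => tl b ∉ X ∧ hd b ∈ X) := by
      rw [Finset.mem_filter]; tauto
    rw [Finset.erase_eq_of_notMem hnm]
    omega

end MengerProof





/-- Lemma 3: in a link-minimal network, the max-flow from the source
to any non-source node equals its in-degree. -/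
theorem lam_eq_inDeg_of_linkMinimal
    {V A : Type} [Fintype V] [Fintype A] (tl hd : A → V) (s : V)
    (hmin : LinkMinimal tl hd s) :
    ∀ v : V, v ≠ s → lam tl hd s v = inDeg hd v := by
  intro v hvs
  classical
  refine le_antisymm (lam_le_inDeg hvs) ?_
  by_contra hcon
  push_neg at hcon
  set lv := lam tl hd s v with hlv
  -- a tight cut of minimal cardinality
  obtain ⟨X1, hX1⟩ := exists_tight_cut (tl := tl) (hd := hd) hvs
  set N : Set ℕ :=
    {n | ∃ X : Set V, (v ∈ X ∧ s ∉ X ∧ cutF tl hd X = lv) ∧ X.ncard = n} with hN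
  have hNne : N.Nonempty := ⟨X1.ncard, X1, hX1, rfl⟩
  obtain ⟨U, hU, hUcard⟩ := Nat.sInf_mem hNne
  -- every tight cut contains U
  have hmin_cut : ∀ Y : Set V, v ∈ Y → s ∉ Y → cutF tl hd Y = lv → U ⊆ Y := by
    intro Y hvY hsY hYt
    have hvI : v ∈ Y ∩ U := ⟨hvY, hU.1⟩
    have hsI : s ∉ Y ∩ U := fun h => hsY h.1
    have hvUn : v ∈ Y ∪ U := Or.inl hvY
    have hsUn : s ∉ Y ∪ U := fun h => h.elim hsY hU.2.1
    have h1 : lv ≤ cutF tl hd (Y ∩ U) := lam_le_cutF hvI hsI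
    have h2 : lv ≤ cutF tl hd (Y ∪ U) := lam_le_cutF hvUn hsUn
    have h3 := cutF_submodular tl hd Y U
    have hUt : cutF tl hd U = lv := hU.2.2
    have hIt : cutF tl hd (Y ∩ U) = lv := by omega
    have hmemN : (Y ∩ U).ncard ∈ N := ⟨Y ∩ U, ⟨hvI, hsI, hIt⟩, rfl⟩
    have hle : sInf N ≤ (Y ∩ U).ncard := Nat.sInf_le hmemN
    have hsub : Y ∩ U ⊆ U := Set.inter_subset_right
    have heqU : Y ∩ U = U :=
      Set.eq_of_subset_of_ncard_le hsub (by omega) (Set.toFinite U)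
    intro x hx
    rw [← heqU] at hx
    exact hx.1
  -- there is an arc into `v` whose tail lies in U
  have hexa : ∃ a : A, hd a = v ∧ tl a ∈ U := by
    by_contra h
    push_neg at h
    have hgood : inDeg hd v ≤ cutF tl hd U := by
      rw [inDeg_eq_card, cutF]
      apply Finset.card_le_card
      intro a ha
      rw [Finset.mem_filter] at ha ⊢
      exact ⟨ha.1, h a ha.2, ha.2 ▸ hU.1⟩
    have hUt : cutF tl hd U = lv := hU.2.2
    omega
  obtain ⟨a, hahd, hatl⟩ := hexa
  -- deleting `a` cannot decrease any max-flow: contradiction with link-minimality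
  obtain ⟨w, hw⟩ := hmin a
  rcases eq_or_ne w s with rfl | hws
  · rw [lam_self, lam_self] at hw
    exact absurd hw (lt_irrefl 0)
  · have hge : lam tl hd s w ≤
        lam (fun b : {b : A // b ≠ a} => tl b.1) (fun b => hd b.1) s w := by
      apply le_lam_of_cut_bound hws
      intro X hwX hsX
      have h5 := cutF_delete tl hd a X
      by_cases hcr : tl a ∉ X ∧ hd a ∈ X
      · have hvX : v ∈ X := hahd ▸ hcr.2
        have h1 : lv + 1 ≤ cutF tl hd (X ∩ U) := by
          have hb : lv ≤ cutF tl hd (X ∩ U) :=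
            lam_le_cutF ⟨hvX, hU.1⟩ (fun h => hsX h.1)
          rcases eq_or_lt_of_le hb with heq | hlt'
          · exfalso
            have hsubU := hmin_cut (X ∩ U) ⟨hvX, hU.1⟩ (fun h => hsX h.1) heq.symm
            exact hcr.1 (hsubU hatl).1
          · omega
        have h2 : lam tl hd s w ≤ cutF tl hd (X ∪ U) :=
          lam_le_cutF (Or.inl hwX) (fun h => h.elim hsX hU.2.1)
        have h3 := cutF_submodular tl hd X U
        have hUt : cutF tl hd U = lv := hU.2.2
        rw [if_pos hcr] at h5
        omega
      · rw [if_neg hcr] at h5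
        have h6 : lam tl hd s w ≤ cutF tl hd X := lam_le_cutF hwX hsX
        omega
    omega

end NCMinor
end

section
/- Let D be a 2-minimal (hence link-minimal) acyclic multicast network with source s. Then every class of the subtree decomposition of D forms a directed tree in which all arcs are directed away from a unique root node, and that root is either the source s or a node of in-degree 2; moreover no class contains two arcs entering the same node. -/
namespace NCMinor

variable {V A : Type}

section Walks

variable {tl hd : A → V}

theorem walk_append {u v w : V} {p q : List A} (hp : IsArcWalk tl hd u v p)
    (hq : IsArcWalk tl hd v w q) : IsArcWalk tl hd u w (p ++ q) := by
  induction p generalizing u with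

  | nil => cases hp; simpa using hq
  | cons a p ih => exact ⟨hp.1, ih hp.2⟩

theorem walk_split {u w : V} {p q : List A} (h : IsArcWalk tl hd u w (p ++ q)) :
    ∃ v, IsArcWalk tl hd u v p ∧ IsArcWalk tl hd v w q := by
  induction p generalizing u with
  | nil => exact ⟨u, rfl, h⟩
  | cons a p ih =>
    obtain ⟨v, h1, h2⟩ := ih h.2
    exact ⟨v, ⟨h.1, h1⟩, h2⟩

theorem walk_nil_of_eq {u v : V} (h : IsArcWalk tl hd u v []) : u = v := h

theorem walk_ne_nil {u v : V} {p : List A} (h : IsArcWalk tl hd u v p) (huv : u ≠ v) :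
    p ≠ [] := by rintro rfl; exact huv h

theorem walk_crossing {u v : V} {p : List A} (h : IsArcWalk tl hd u v p) {W : Set V}
    (hu : u ∉ W) (hv : v ∈ W) : ∃ a ∈ p, tl a ∉ W ∧ hd a ∈ W := by
  induction p generalizing u with
  | nil => cases h; exact absurd hv hu
  | cons a p ih =>
    by_cases hw : hd a ∈ W
    · exact ⟨a, List.mem_cons_self, h.1 ▸ hu, hw⟩
    · obtain ⟨b, hb, hb2⟩ := ih h.2 hw
      exact ⟨b, List.mem_cons_of_mem _ hb, hb2⟩

theorem walk_last {u v : V} {p : List A} (h : IsArcWalk tl hd u v p) (hne : p ≠ []) :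
    ∃ q a, p = q ++ [a] ∧ IsArcWalk tl hd u (tl a) q ∧ hd a = v := by
  obtain ⟨q, a, rfl⟩ := (List.eq_nil_or_concat p).resolve_left hne
  rw [List.concat_eq_append] at h ⊢
  obtain ⟨m, h1, h2⟩ := walk_split h
  obtain ⟨h3, h4⟩ := h2
  exact ⟨q, a, rfl, h3 ▸ h1, h4⟩

theorem walk_nodup (hacyc : Acyclic tl hd) {u v : V} {p : List A}
    (h : IsArcWalk tl hd u v p) : p.Nodup := by
  induction p generalizing u with
  | nil => exact List.nodup_nil
  | cons a p ih =>
    refine List.nodup_cons.2 ⟨?_, ih h.2⟩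
    intro hmem
    obtain ⟨q, r, rfl⟩ := List.append_of_mem hmem
    obtain ⟨m, h1, h2⟩ := walk_split h.2
    have : m = tl a := h2.1.symm
    subst this
    have : IsArcWalk tl hd (tl a) (tl a) (a :: q) := ⟨rfl, h1⟩
    simpa using hacyc _ _ this

end Walks

section Lam

variable {tl hd : A → V}

def lamSet (tl hd : A → V) (s v : V) : Set ℕ :=
  {k | ∃ P : Fin k → List A,
    (∀ i, IsArcWalk tl hd s v (P i)) ∧
    ∀ i j : Fin k, i ≠ j → ∀ a, a ∈ P i → a ∉ P j}

theorem lam_eq_sSup (tl hd : A → V) (s v : V) : lam tl hd s v = sSup (lamSet tl hd s v) := rfl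

theorem lamSet_zero_mem (tl hd : A → V) (s v : V) : 0 ∈ lamSet tl hd s v :=
  ⟨fun i => i.elim0, fun i => i.elim0, fun i => i.elim0⟩

theorem lamSet_bddAbove [Fintype A] (tl hd : A → V) {s v : V} (hsv : s ≠ v) :
    BddAbove (lamSet tl hd s v) := by
  refine ⟨Fintype.card A, fun k hk => ?_⟩
  obtain ⟨P, hP, hdisj⟩ := hk
  have hne : ∀ i, P i ≠ [] := fun i => walk_ne_nil (hP i) hsv
  have hinj : Function.Injective (fun i : Fin k => (P i).head (hne i)) := by
    intro i j hij
    by_contra hne'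
    have h1 : (P i).head (hne i) ∈ P i := List.head_mem _
    have h2 : (P j).head (hne j) ∈ P j := List.head_mem _
    rw [show (P i).head (hne i) = (P j).head (hne j) from hij] at h1
    exact hdisj i j hne' _ h1 h2
  simpa using Fintype.card_le_of_injective _ hinj

/-- two disjoint walks from a `lam ≥ 2` bound -/
theorem exists_pair_of_two_le_lam [Fintype A] {s v : V} (hsv : s ≠ v)
    (h : 2 ≤ lam tl hd s v) :
    ∃ P₁ P₂ : List A, IsArcWalk tl hd s v P₁ ∧ IsArcWalk tl hd s v P₂ ∧
      ∀ a ∈ P₁, a ∉ P₂ := by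
  have hmem : lam tl hd s v ∈ lamSet tl hd s v :=
    Nat.sSup_mem ⟨0, lamSet_zero_mem tl hd s v⟩ (lamSet_bddAbove tl hd hsv)
  obtain ⟨P, hP, hdisj⟩ := hmem
  have h0 : 0 < lam tl hd s v := by omega
  have h1 : 1 < lam tl hd s v := by omega
  refine ⟨P ⟨0, h0⟩, P ⟨1, h1⟩, hP _, hP _, fun a ha => hdisj _ _ (by simp) a ha⟩

theorem two_le_lam_of_pair [Fintype A] {s v : V} (hsv : s ≠ v) {P₁ P₂ : List A}
    (h1 : IsArcWalk tl hd s v P₁) (h2 : IsArcWalk tl hd s v P₂)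
    (hd12 : ∀ a ∈ P₁, a ∉ P₂) : 2 ≤ lam tl hd s v := by
  have hmem : 2 ∈ lamSet tl hd s v := by
    refine ⟨fun i => if i = 0 then P₁ else P₂, fun i => ?_, fun i j hij a hai haj => ?_⟩
    · by_cases h : i = 0 <;> simp [h, h1, h2]
    · fin_cases i <;> fin_cases j <;> simp_all
      all_goals first
        | exact hd12 a hai haj
        | exact hd12 a haj hai
  exact le_csSup (lamSet_bddAbove tl hd hsv) hmem

end Lam


section Lift

variable {tl hd : A → V}

/-- lift a walk avoiding `e` to the deleted graph -/
theorem walk_lift (e : A) {u v : V} :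
    ∀ (p : List A), IsArcWalk tl hd u v p → (∀ b ∈ p, b ≠ e) →
    ∃ p' : List {b : A // b ≠ e},
      IsArcWalk (fun b => tl b.1) (fun b => hd b.1) u v p' ∧
      ∀ b : {b : A // b ≠ e}, b ∈ p' ↔ b.1 ∈ p := by
  intro p
  induction p generalizing u with
  | nil =>
    intro h _
    exact ⟨[], h, by simp⟩
  | cons a p ih =>
    intro h hne
    obtain ⟨p', hp', hmem⟩ := ih h.2 (fun b hb => hne b (List.mem_cons_of_mem _ hb))
    refine ⟨⟨a, hne a (List.mem_cons_self)⟩ :: p', ⟨h.1, hp'⟩, ?_⟩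
    intro b
    simp only [List.mem_cons, hmem]
    constructor
    · rintro (rfl | h')
      · left; rfl
      · right; exact h'
    · rintro (h' | h')
      · left; exact Subtype.ext h'
      · right; exact h'

/-- a disjoint pair avoiding `e` gives rate 2 in the deleted network -/
theorem two_le_lam_del_of_pair [Fintype A] (e : A) {s v : V} (hsv : s ≠ v)
    {P₁ P₂ : List A}
    (h1 : IsArcWalk tl hd s v P₁) (h2 : IsArcWalk tl hd s v P₂)
    (hd12 : ∀ a ∈ P₁, a ∉ P₂) (he1 : e ∉ P₁) (he2 : e ∉ P₂) :
    2 ≤ lam (fun b : {b : A // b ≠ e} => tl b.1) (fun b => hd b.1) s v := by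
  haveI : Fintype {b : A // b ≠ e} := Fintype.ofFinite _
  obtain ⟨Q₁, hQ₁, hm₁⟩ := walk_lift e P₁ h1 (fun b hb => fun h => he1 (h ▸ hb))
  obtain ⟨Q₂, hQ₂, hm₂⟩ := walk_lift e P₂ h2 (fun b hb => fun h => he2 (h ▸ hb))
  exact two_le_lam_of_pair hsv hQ₁ hQ₂
    (fun a ha hb => hd12 a.1 ((hm₁ a).1 ha) ((hm₂ a).1 hb))

/-- the key driver: if for every receiver every disjoint pair can be rerouted to
avoid `e`, then 2-minimality is contradicted. -/
theorem keyHelper [Fintype A] {s : V} {T : Set V} (hsT : s ∉ T)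
    (hmin : TwoMinimal tl hd s T) (e : A)
    (H : ∀ t ∈ T, ∀ P₁ P₂ : List A, IsArcWalk tl hd s t P₁ → IsArcWalk tl hd s t P₂ →
      (∀ a ∈ P₁, a ∉ P₂) →
      ∃ Q₁ Q₂ : List A, IsArcWalk tl hd s t Q₁ ∧ IsArcWalk tl hd s t Q₂ ∧
        (∀ a ∈ Q₁, a ∉ Q₂) ∧ e ∉ Q₁ ∧ e ∉ Q₂) : False := by
  obtain ⟨t, htT, hlt⟩ := hmin.2 e
  have hts : s ≠ t := fun h => hsT (h ▸ htT)
  obtain ⟨P₁, P₂, h1, h2, h12⟩ := exists_pair_of_two_le_lam hts (hmin.1 t htT)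
  obtain ⟨Q₁, Q₂, hQ1, hQ2, hQ12, he1, he2⟩ := H t htT P₁ P₂ h1 h2 h12
  have := two_le_lam_del_of_pair e hts hQ1 hQ2 hQ12 he1 he2
  omega

/-- no arc enters the source -/
theorem no_head_s [Fintype A] {s : V} {T : Set V} (hsT : s ∉ T)
    (hacyc : Acyclic tl hd) (hmin : TwoMinimal tl hd s T) (e : A) : hd e ≠ s := by
  intro hes
  refine keyHelper hsT hmin e (fun t htT P₁ P₂ h1 h2 h12 => ?_)
  have key : ∀ (P : List A), IsArcWalk tl hd s t P → e ∉ P := by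
    intro P hP heP
    obtain ⟨q, r, rfl⟩ := List.append_of_mem heP
    obtain ⟨m, hq, hr⟩ := walk_split hP
    have hm : m = tl e := hr.1.symm
    subst hm
    have : IsArcWalk tl hd s s (q ++ [e]) := walk_append hq ⟨rfl, hes⟩
    simpa using hacyc _ _ this
  exact ⟨P₁, P₂, h1, h2, h12, key P₁ h1, key P₂ h2⟩

theorem inDeg_s_eq_zero [Fintype A] {s : V} {T : Set V} (hsT : s ∉ T)
    (hacyc : Acyclic tl hd) (hmin : TwoMinimal tl hd s T) : inDeg hd s = 0 := by
  have : {a | hd a = s} = ∅ := by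
    ext a; simp [no_head_s hsT hacyc hmin a]
  simp [inDeg, this]

/-- every arc's tail is reachable from the source -/
theorem tail_reachable [Fintype A] {s : V} {T : Set V} (hsT : s ∉ T)
    (hacyc : Acyclic tl hd) (hmin : TwoMinimal tl hd s T) (e : A) :
    ∃ p, IsArcWalk tl hd s (tl e) p := by
  by_contra hno
  refine keyHelper hsT hmin e (fun t htT P₁ P₂ h1 h2 h12 => ?_)
  have key : ∀ (P : List A), IsArcWalk tl hd s t P → e ∉ P := by
    intro P hP heP
    obtain ⟨q, r, rfl⟩ := List.append_of_mem heP
    obtain ⟨m, hq, hr⟩ := walk_split hP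
    exact hno ⟨q, hr.1 ▸ hq⟩
  exact ⟨P₁, P₂, h1, h2, h12, key P₁ h1, key P₂ h2⟩

end Lift

section InDeg

variable {tl hd : A → V}

theorem inDeg_unique [Fintype A] {v : V} (h : inDeg hd v = 1) :
    ∃! a, hd a = v := by
  rw [inDeg, Set.ncard_eq_one] at h
  obtain ⟨a, ha⟩ := h
  refine ⟨a, ?_, fun b hb => ?_⟩
  · have : a ∈ {b | hd b = v} := ha ▸ rfl
    exact this
  · have : b ∈ ({a} : Set A) := ha ▸ hb
    exact this

theorem two_le_inDeg [Fintype A] {v : V} {a b : A} (hab : a ≠ b) (ha : hd a = v) (hb : hd b = v) :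
    2 ≤ inDeg hd v := by
  have hsub : ({a, b} : Set A) ⊆ {c | hd c = v} := by
    rintro c (rfl | rfl) <;> assumption
  calc 2 = ({a, b} : Set A).ncard := (Set.ncard_pair hab).symm
    _ ≤ _ := Set.ncard_le_ncard hsub (Set.toFinite _)

theorem inDeg_pos_of_head [Fintype A] {v : V} {a : A} (ha : hd a = v) : 1 ≤ inDeg hd v := by
  have : ({a} : Set A) ⊆ {c | hd c = v} := by rintro c rfl; exact ha
  calc 1 = ({a} : Set A).ncard := (Set.ncard_singleton a).symm
    _ ≤ _ := Set.ncard_le_ncard this (Set.toFinite _)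

end InDeg

section Structure

open scoped Classical

variable [Fintype A] {tl hd : A → V}

theorem subtreeRel_wf (hacyc : Acyclic tl hd) : WellFounded (SubtreeRel tl hd) := by
  have hchain : ∀ x y, Relation.TransGen (SubtreeRel tl hd) x y →
      ∃ p, IsArcWalk tl hd (tl x) (tl y) (x :: p) := by
    intro x y h
    induction h with
    | single h => exact ⟨[], rfl, h.1⟩
    | tail _ h2 ih =>
      obtain ⟨p, hp⟩ := ih
      exact ⟨p ++ [_], by
        have := walk_append hp (show IsArcWalk tl hd (tl _) (tl _) [_] from ⟨rfl, h2.1⟩)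
        simpa using this⟩
  have hirr : ∀ a, ¬ Relation.TransGen (SubtreeRel tl hd) a a := by
    intro a h
    obtain ⟨p, hp⟩ := hchain a a h
    simpa using hacyc _ _ hp
  haveI : IsTrans A (Relation.TransGen (SubtreeRel tl hd)) := ⟨fun _ _ _ => Relation.TransGen.trans⟩
  haveI : IsIrrefl A (Relation.TransGen (SubtreeRel tl hd)) := ⟨hirr⟩
  exact Subrelation.wf (fun h => Relation.TransGen.single h)
    (Finite.wellFounded_of_trans_of_irrefl _)

variable (tl hd) in
noncomputable def rootArc (w : WellFounded (SubtreeRel tl hd)) : A → A :=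
  w.fix (fun b IH =>
    if h : ∃ a, SubtreeRel tl hd a b then IH h.choose h.choose_spec else b)

variable (tl hd) in
noncomputable def anc (w : WellFounded (SubtreeRel tl hd)) : A → List A :=
  w.fix (fun b IH =>
    if h : ∃ a, SubtreeRel tl hd a b then IH h.choose h.choose_spec ++ [h.choose] else [])

variable {w : WellFounded (SubtreeRel tl hd)}

theorem rootArc_eq (b : A) :
    rootArc tl hd w b = if h : ∃ a, SubtreeRel tl hd a b then
      rootArc tl hd w h.choose else b := by
  rw [rootArc, WellFounded.fix_eq]

theorem anc_eq (b : A) :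
    anc tl hd w b = if h : ∃ a, SubtreeRel tl hd a b then
      anc tl hd w h.choose ++ [h.choose] else [] := by
  rw [anc, WellFounded.fix_eq]

theorem rootArc_quot (b : A) :
    Quot.mk (SubtreeRel tl hd) (rootArc tl hd w b) = Quot.mk (SubtreeRel tl hd) b := by
  induction b using WellFounded.induction w with
  | _ b IH =>
    rw [rootArc_eq]
    split
    · next h => exact (IH _ h.choose_spec).trans (Quot.sound h.choose_spec)
    · rfl

theorem rootArc_no_parent (b : A) : ¬ ∃ a, SubtreeRel tl hd a (rootArc tl hd w b) := by
  induction b using WellFounded.induction w with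
  | _ b IH =>
    rw [rootArc_eq]
    split
    · next h => exact IH _ h.choose_spec
    · next h => exact h

theorem inDeg_tl_rootArc_ne_one (b : A) : inDeg hd (tl (rootArc tl hd w b)) ≠ 1 := by
  intro h1
  obtain ⟨a, ha, -⟩ := inDeg_unique h1
  exact rootArc_no_parent (w := w) b ⟨a, ha, ha ▸ h1⟩

theorem rootArc_parent {a b : A} (hab : SubtreeRel tl hd a b) :
    rootArc tl hd w b = rootArc tl hd w a := by
  rw [rootArc_eq]
  have h : ∃ a', SubtreeRel tl hd a' b := ⟨a, hab⟩
  rw [dif_pos h]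
  congr 1
  have h1 : inDeg hd (tl b) = 1 := hab.1 ▸ hab.2
  obtain ⟨c, -, hc⟩ := inDeg_unique h1
  rw [hc _ h.choose_spec.1, hc _ hab.1]

theorem rootArc_of_quot_eq {a b : A}
    (h : Quot.mk (SubtreeRel tl hd) a = Quot.mk (SubtreeRel tl hd) b) :
    rootArc tl hd w a = rootArc tl hd w b := by
  have hresp : ∀ x y, SubtreeRel tl hd x y → rootArc tl hd w x = rootArc tl hd w y :=
    fun x y hxy => (rootArc_parent hxy).symm
  exact congrArg (Quot.lift (rootArc tl hd w) hresp) h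

theorem anc_walk (b : A) :
    IsArcWalk tl hd (tl (rootArc tl hd w b)) (tl b) (anc tl hd w b) ∧
    (∀ c ∈ anc tl hd w b,
      Quot.mk (SubtreeRel tl hd) c = Quot.mk (SubtreeRel tl hd) b ∧
      ∃ d, SubtreeRel tl hd c d) := by
  induction b using WellFounded.induction w with
  | _ b IH =>
    rw [anc_eq, rootArc_eq]
    split
    · next h =>
      set a := h.choose with ha
      have hab : SubtreeRel tl hd a b := h.choose_spec
      obtain ⟨IH1, IH2⟩ := IH a hab
      constructor
      · exact walk_append IH1 ⟨rfl, hab.1⟩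
      · intro c hc
        rcases List.mem_append.1 hc with hc | hc
        · obtain ⟨h1, h2⟩ := IH2 c hc
          exact ⟨h1.trans (Quot.sound hab), h2⟩
        · have : c = a := by simpa using hc
          subst this
          exact ⟨Quot.sound hab, b, hab⟩
    · exact ⟨rfl, by simp⟩

theorem rootArc_mem (b : A) : rootArc tl hd w b ∈ anc tl hd w b ++ [b] := by
  induction b using WellFounded.induction w with
  | _ b IH =>
    rw [anc_eq, rootArc_eq]
    split
    · next h =>
      have := IH _ h.choose_spec
      rcases List.mem_append.1 this with hc | hc
      · simp [List.mem_append, hc]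
      · simp only [List.mem_singleton] at hc
        simp [List.mem_append, hc]
    · simp

/-- containment: every `s`-walk through `b` contains the full ancestor chain -/
theorem anc_containment {s : V} (hs0 : ∀ e : A, hd e ≠ s) (b : A) :
    ∀ (q rest : List A) (z : V), IsArcWalk tl hd s z (q ++ b :: rest) →
    ∃ W, q = W ++ anc tl hd w b ∧ IsArcWalk tl hd s (tl (rootArc tl hd w b)) W := by
  induction b using WellFounded.induction w with
  | _ b IH =>
    intro q rest z hwalk
    obtain ⟨m, hq, hrest⟩ := walk_split hwalk
    have hm : m = tl b := hrest.1.symm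
    subst hm
    by_cases h : ∃ a, SubtreeRel tl hd a b
    · have hab : SubtreeRel tl hd h.choose b := h.choose_spec
      set a := h.choose
      have h1 : inDeg hd (tl b) = 1 := hab.1 ▸ hab.2
      have hbs : tl b ≠ s := by
        intro hh
        have := inDeg_pos_of_head (v := tl b) (a := a) hab.1
        obtain ⟨c, hc, -⟩ := inDeg_unique h1
        exact hs0 c (hh ▸ hc)
      have hqne : q ≠ [] := walk_ne_nil hq (fun hh => hbs hh.symm)
      obtain ⟨q₀, e', heq, hq₀, he⟩ := walk_last hq hqne
      subst heq
      have hea : e' = a := by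
        obtain ⟨c, -, hc⟩ := inDeg_unique h1
        rw [hc _ he, hc _ hab.1]
      subst hea
      have hwalk' : IsArcWalk tl hd s z (q₀ ++ a :: (b :: rest)) := by
        have heq2 : q₀ ++ [a] ++ b :: rest = q₀ ++ a :: (b :: rest) := by simp
        rw [← heq2]; exact hwalk
      obtain ⟨W, hW1, hW2⟩ := IH a hab q₀ (b :: rest) z hwalk'
      refine ⟨W, ?_, ?_⟩
      · rw [anc_eq, dif_pos h, hW1]
        simp
        exact ⟨rfl, rfl⟩
      · rw [rootArc_eq, dif_pos h]
        exact hW2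
    · refine ⟨q, ?_, ?_⟩
      · rw [anc_eq, dif_neg h]; simp
      · rw [rootArc_eq, dif_neg h]; exact hq

end Structure

section Residual

open scoped Classical

variable {tl hd : A → V}

/-- residual walk w.r.t. the path `P` and forbidden arc `a₀` -/
def IsResWalk (tl hd : A → V) (P : List A) (a₀ : A) : V → List (A × Bool) → V → Prop
  | x, [], y => x = y
  | x, (b, true) :: l, y => b ∉ P ∧ b ≠ a₀ ∧ tl b = x ∧ IsResWalk tl hd P a₀ (hd b) l y
  | x, (b, false) :: l, y => b ∈ P ∧ hd b = x ∧ IsResWalk tl hd P a₀ (tl b) l y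

def rvisits (tl hd : A → V) : V → List (A × Bool) → List V
  | x, [] => [x]
  | x, (b, true) :: l => x :: rvisits tl hd (hd b) l
  | x, (b, false) :: l => x :: rvisits tl hd (tl b) l

variable {P : List A} {a₀ : A}

theorem resWalk_append {x m y : V} {l₁ l₂ : List (A × Bool)}
    (h1 : IsResWalk tl hd P a₀ x l₁ m) (h2 : IsResWalk tl hd P a₀ m l₂ y) :
    IsResWalk tl hd P a₀ x (l₁ ++ l₂) y := by
  induction l₁ generalizing x with
  | nil => cases h1; simpa using h2
  | cons st l ih =>
    obtain ⟨b, dir⟩ := st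
    cases dir
    · exact ⟨h1.1, h1.2.1, ih h1.2.2⟩
    · exact ⟨h1.1, h1.2.1, h1.2.2.1, ih h1.2.2.2⟩

theorem self_mem_rvisits (x : V) (l : List (A × Bool)) : x ∈ rvisits tl hd x l := by
  cases l with
  | nil => simp [rvisits]
  | cons st l => obtain ⟨b, dir⟩ := st; cases dir <;> simp [rvisits]

theorem rvisits_mem_append {x m : V} {l₁ l₂ : List (A × Bool)}
    (h1 : IsResWalk tl hd P a₀ x l₁ m) {v : V} (hv : v ∈ rvisits tl hd m l₂) :
    v ∈ rvisits tl hd x (l₁ ++ l₂) := by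
  induction l₁ generalizing x with
  | nil => cases h1; simpa using hv
  | cons st l ih =>
    obtain ⟨b, dir⟩ := st
    cases dir
    · exact List.mem_cons_of_mem _ (ih h1.2.2)
    · exact List.mem_cons_of_mem _ (ih h1.2.2.2)

theorem resWalk_cons_elim {x y : V} {st : A × Bool} {l : List (A × Bool)}
    (h : IsResWalk tl hd P a₀ x (st :: l) y) :
    ∃ nxt, IsResWalk tl hd P a₀ nxt l y ∧
      (∀ l₃ z, IsResWalk tl hd P a₀ nxt l₃ z → IsResWalk tl hd P a₀ x (st :: l₃) z) ∧
      ∀ l₃, rvisits tl hd x (st :: l₃) = x :: rvisits tl hd nxt l₃ := by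
  obtain ⟨b, dir⟩ := st
  cases dir
  · exact ⟨tl b, h.2.2, fun l₃ z hz => ⟨h.1, h.2.1, hz⟩, fun l₃ => rfl⟩
  · exact ⟨hd b, h.2.2.2, fun l₃ z hz => ⟨h.1, h.2.1, h.2.2.1, hz⟩, fun l₃ => rfl⟩

theorem resWalk_mem_split {x y z : V} {l : List (A × Bool)}
    (h : IsResWalk tl hd P a₀ x l y) (hz : z ∈ rvisits tl hd x l) :
    ∃ l₁ l₂, l = l₁ ++ l₂ ∧ IsResWalk tl hd P a₀ x l₁ z ∧ IsResWalk tl hd P a₀ z l₂ y := by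
  induction l generalizing x with
  | nil =>
    cases h
    simp only [rvisits, List.mem_singleton] at hz
    exact ⟨[], [], rfl, hz.symm, hz ▸ rfl⟩
  | cons st l ih =>
    obtain ⟨nxt, hnxt, hcons, hvis⟩ := resWalk_cons_elim h
    rw [hvis l] at hz
    rcases List.mem_cons.1 hz with rfl | hz'
    · exact ⟨[], _, rfl, rfl, h⟩
    · obtain ⟨l₁, l₂, rfl, hl₁, hl₂⟩ := ih hnxt hz'
      exact ⟨st :: l₁, l₂, rfl, hcons l₁ z hl₁, hl₂⟩

theorem resWalk_shorten : ∀ (n : ℕ) (l : List (A × Bool)) (x y : V), l.length ≤ n →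
    IsResWalk tl hd P a₀ x l y →
    ∃ l', IsResWalk tl hd P a₀ x l' y ∧ (rvisits tl hd x l').Nodup ∧
      (∀ v ∈ rvisits tl hd x l', v ∈ rvisits tl hd x l) ∧ ∀ st ∈ l', st ∈ l := by
  intro n
  induction n with
  | zero =>
    intro l x y hlen h
    have : l = [] := List.eq_nil_of_length_eq_zero (Nat.le_zero.1 hlen)
    subst this
    exact ⟨[], h, by simp [rvisits], by simp, by simp⟩
  | succ n ih =>
    intro l x y hlen h
    cases l with
    | nil => exact ⟨[], h, by simp [rvisits], by simp, by simp⟩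
    | cons st l'' =>
      obtain ⟨nxt, hnxt, hcons, hvis⟩ := resWalk_cons_elim h
      simp only [List.length_cons, Nat.succ_le_succ_iff] at hlen
      by_cases hx : x ∈ rvisits tl hd nxt l''
      · obtain ⟨l₁, l₂, heq, hl₁, hl₂⟩ := resWalk_mem_split hnxt hx
        have hlen₂ : l₂.length ≤ n := by
          have := congrArg List.length heq
          simp only [List.length_append] at this
          omega
        obtain ⟨l', h1, h2, h3, h4⟩ := ih l₂ x y hlen₂ hl₂
        refine ⟨l', h1, h2, fun v hv => ?_, fun st' hst' => ?_⟩
        · rw [hvis l'']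
          refine List.mem_cons_of_mem _ ?_
          rw [heq]
          exact rvisits_mem_append hl₁ (h3 v hv)
        · exact List.mem_cons_of_mem _ (heq ▸ List.mem_append.2 (Or.inr (h4 st' hst')))
      · obtain ⟨l₃, h1, h2, h3, h4⟩ := ih l'' nxt y hlen hnxt
        refine ⟨st :: l₃, hcons l₃ y h1, ?_, ?_, ?_⟩
        · rw [hvis l₃]
          exact List.nodup_cons.2 ⟨fun hc => hx (h3 x hc), h2⟩
        · intro v hv
          rw [hvis l₃] at hv
          rw [hvis l'']
          rcases List.mem_cons.1 hv with rfl | hv'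
          · exact List.mem_cons_self
          · exact List.mem_cons_of_mem _ (h3 v hv')
        · intro st' hst'
          rcases List.mem_cons.1 hst' with rfl | hst''
          · exact List.mem_cons_self
          · exact List.mem_cons_of_mem _ (h4 st' hst'')

theorem resWalk_endpoints_visited {x y : V} {l : List (A × Bool)}
    (h : IsResWalk tl hd P a₀ x l y) {b : A} {d : Bool} (hb : (b, d) ∈ l) :
    tl b ∈ rvisits tl hd x l ∧ hd b ∈ rvisits tl hd x l := by
  induction l generalizing x with
  | nil => simp at hb
  | cons st l ih =>
    obtain ⟨b', d'⟩ := st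
    rcases List.mem_cons.1 hb with heq | hb'
    · rw [Prod.mk.injEq] at heq
      obtain ⟨rfl, rfl⟩ := heq
      cases d
      · -- backward step : hd b = x, continue at tl b
        obtain ⟨-, hbx, -⟩ := h
        exact ⟨List.mem_cons_of_mem _ (self_mem_rvisits _ _), by simp [rvisits, hbx]⟩
      · -- forward step : tl b = x, continue at hd b
        obtain ⟨-, -, hbx, -⟩ := h
        exact ⟨by simp [rvisits, hbx], List.mem_cons_of_mem _ (self_mem_rvisits _ _)⟩
    · cases d'
      · obtain ⟨h1, h2⟩ := ih h.2.2 hb'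
        exact ⟨List.mem_cons_of_mem _ h1, List.mem_cons_of_mem _ h2⟩
      · obtain ⟨h1, h2⟩ := ih h.2.2.2 hb'
        exact ⟨List.mem_cons_of_mem _ h1, List.mem_cons_of_mem _ h2⟩

theorem resWalk_arcs_nodup {x y : V} {l : List (A × Bool)}
    (h : IsResWalk tl hd P a₀ x l y) (hvis : (rvisits tl hd x l).Nodup) :
    (l.map Prod.fst).Nodup := by
  induction l generalizing x with
  | nil => simp
  | cons st l ih =>
    obtain ⟨b, d⟩ := st
    cases d
    · -- backward : hd b = x, next tl b
      obtain ⟨-, hbx, hrest⟩ := h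
      simp only [rvisits, List.nodup_cons] at hvis
      refine List.nodup_cons.2 ⟨?_, ih hrest hvis.2⟩
      intro hmem
      obtain ⟨⟨b', d'⟩, hb', hb'eq⟩ := List.mem_map.1 hmem
      cases hb'eq
      exact hvis.1 (hbx ▸ (resWalk_endpoints_visited hrest hb').2)
    · obtain ⟨-, -, hbx, hrest⟩ := h
      simp only [rvisits, List.nodup_cons] at hvis
      refine List.nodup_cons.2 ⟨?_, ih hrest hvis.2⟩
      intro hmem
      obtain ⟨⟨b', d'⟩, hb', hb'eq⟩ := List.mem_map.1 hmem
      cases hb'eq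
      exact hvis.1 (hbx ▸ (resWalk_endpoints_visited hrest hb').1)

theorem resWalk_step_conds {x y : V} {l : List (A × Bool)}
    (h : IsResWalk tl hd P a₀ x l y) :
    (∀ b : A, (b, true) ∈ l → b ∉ P ∧ b ≠ a₀) ∧ (∀ b : A, (b, false) ∈ l → b ∈ P) := by
  induction l generalizing x with
  | nil => exact ⟨by simp, by simp⟩
  | cons st l ih =>
    obtain ⟨b', d'⟩ := st
    cases d'
    · obtain ⟨hb', -, hrest⟩ := h
      obtain ⟨ih1, ih2⟩ := ih hrest
      refine ⟨fun b hb => ih1 b (by simpa using hb), fun b hb => ?_⟩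
      rcases List.mem_cons.1 hb with heq | hb''
      · cases heq; exact hb'
      · exact ih2 b hb''
    · obtain ⟨hb', hb'2, -, hrest⟩ := h
      obtain ⟨ih1, ih2⟩ := ih hrest
      refine ⟨fun b hb => ?_, fun b hb => ih2 b (by simpa using hb)⟩
      rcases List.mem_cons.1 hb with heq | hb''
      · cases heq; exact ⟨hb', hb'2⟩
      · exact ih1 b hb''

end Residual

section Flows

open scoped Classical

variable {tl hd : A → V}

noncomputable def adiv (tl hd : A → V) (K : Multiset A) (v : V) : ℤ :=
  (K.countP (fun a => tl a = v) : ℤ) - (K.countP (fun a => hd a = v) : ℤ)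

noncomputable def dd (x v : V) : ℤ := if x = v then 1 else 0

theorem adiv_cons (K : Multiset A) (b : A) (v : V) :
    adiv tl hd (b ::ₘ K) v = adiv tl hd K v + dd (tl b) v - dd (hd b) v := by
  simp only [adiv, Multiset.countP_cons, dd]
  split_ifs <;> push_cast <;> ring

theorem adiv_erase {K : Multiset A} {b : A} (hb : b ∈ K) (v : V) :
    adiv tl hd (K.erase b) v = adiv tl hd K v - dd (tl b) v + dd (hd b) v := by
  have h := adiv_cons (tl := tl) (hd := hd) (K.erase b) b v
  rw [Multiset.cons_erase hb] at h
  linarith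

theorem walk_adiv : ∀ (p : List A) (u z : V), IsArcWalk tl hd u z p →
    ∀ v, adiv tl hd (↑p) v = dd u v - dd z v := by
  intro p
  induction p with
  | nil =>
    intro u z h v
    cases h
    simp [adiv]
  | cons a p ih =>
    intro u z h v
    rw [← Multiset.cons_coe, adiv_cons, ih (hd a) z h.2 v, h.1]
    ring

theorem coe_le_of_nodup_subset {p : List A} {K : Multiset A} (hp : p.Nodup)
    (hsub : ∀ b ∈ p, b ∈ K) : (↑p : Multiset A) ≤ K := by
  rw [Multiset.le_iff_count]
  intro a
  rw [Multiset.coe_count]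
  by_cases ha : a ∈ p
  · have h1 : p.count a ≤ 1 := List.nodup_iff_count_le_one.1 hp a
    have h2 : 1 ≤ K.count a := Multiset.one_le_count_iff_mem.2 (hsub a ha)
    omega
  · simp [List.count_eq_zero.2 ha]

theorem adiv_sub {L K : Multiset A} (hle : L ≤ K) (v : V) :
    adiv tl hd (K - L) v = adiv tl hd K v - adiv tl hd L v := by
  have h := tsub_add_cancel_of_le hle
  have h1 := congrArg (Multiset.countP (fun a => tl a = v)) h
  have h2 := congrArg (Multiset.countP (fun a => hd a = v)) h
  rw [Multiset.countP_add] at h1 h2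
  simp only [adiv]
  omega

theorem augment {P : List A} {a₀ : A} : ∀ (l : List (A × Bool)) (x : V) (K : Multiset A)
    (y : V), IsResWalk tl hd P a₀ x l y →
    (l.map Prod.fst).Nodup → K.Nodup →
    (∀ b : A, (b, true) ∈ l → b ∉ K) → (∀ b : A, (b, false) ∈ l → b ∈ K) →
    ∃ K' : Multiset A, K'.Nodup ∧ (∀ b ∈ K', b ∈ K ∨ (b, true) ∈ l) ∧
      ∀ v, adiv tl hd K' v = adiv tl hd K v + dd x v - dd y v := by
  intro l
  induction l with
  | nil =>
    intro x K y h _ hK _ _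
    cases h
    exact ⟨K, hK, fun b hb => Or.inl hb, fun v => by ring⟩
  | cons st l ih =>
    intro x K y h hnd hK hfwd hbwd
    obtain ⟨b, dir⟩ := st
    simp only [List.map_cons, List.nodup_cons] at hnd
    cases dir
    · -- backward step: remove b from K
      obtain ⟨hbP, hbx, hrest⟩ := h
      have hbK : b ∈ K := hbwd b (List.mem_cons_self)
      have hcond1 : ∀ c : A, (c, true) ∈ l → c ∉ K.erase b :=
        fun c hc hcK => hfwd c (List.mem_cons_of_mem _ hc) (Multiset.mem_of_mem_erase hcK)
      have hcond2 : ∀ c : A, (c, false) ∈ l → c ∈ K.erase b := by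
        intro c hc
        have hcb : c ≠ b := fun hh => hnd.1 (List.mem_map.2 ⟨(c, false), hc, hh⟩)
        exact (Multiset.mem_erase_of_ne hcb).2 (hbwd c (List.mem_cons_of_mem _ hc))
      obtain ⟨K', hK'1, hK'2, hK'3⟩ := ih (tl b) (K.erase b) y hrest hnd.2 (hK.erase b)
        hcond1 hcond2
      refine ⟨K', hK'1, ?_, ?_⟩
      · intro c hc
        rcases hK'2 c hc with hc' | hc'
        · exact Or.inl (Multiset.mem_of_mem_erase hc')
        · exact Or.inr (List.mem_cons_of_mem _ hc')
      · intro v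
        rw [hK'3 v, adiv_erase hbK v, ← hbx]
        ring
    · -- forward step: add b to K
      obtain ⟨hbP, hba, hbx, hrest⟩ := h
      have hbK : b ∉ K := hfwd b (List.mem_cons_self)
      have hcond1 : ∀ c : A, (c, true) ∈ l → c ∉ (b ::ₘ K) := by
        intro c hc hcK
        rcases Multiset.mem_cons.1 hcK with rfl | hcK'
        · exact hnd.1 (List.mem_map.2 ⟨(c, true), hc, rfl⟩)
        · exact hfwd c (List.mem_cons_of_mem _ hc) hcK'
      have hcond2 : ∀ c : A, (c, false) ∈ l → c ∈ (b ::ₘ K) :=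
        fun c hc => Multiset.mem_cons_of_mem (hbwd c (List.mem_cons_of_mem _ hc))
      obtain ⟨K', hK'1, hK'2, hK'3⟩ := ih (hd b) (b ::ₘ K) y hrest hnd.2
        (Multiset.nodup_cons.2 ⟨hbK, hK⟩) hcond1 hcond2
      refine ⟨K', hK'1, ?_, ?_⟩
      · intro c hc
        rcases hK'2 c hc with hc' | hc'
        · rcases Multiset.mem_cons.1 hc' with rfl | hc''
          · exact Or.inr (List.mem_cons_self)
          · exact Or.inl hc''
        · exact Or.inr (List.mem_cons_of_mem _ hc')
      · intro v
        rw [hK'3 v, adiv_cons, ← hbx]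
        ring

/-- extract one path from an integral flow -/
theorem extract_path [Fintype A] (hacyc : Acyclic tl hd) {s z : V}
    (hs0 : ∀ e : A, hd e ≠ s) (hsz : s ≠ z) (K : Multiset A) (hK : K.Nodup)
    {c : ℤ} (hdiv : ∀ v, adiv tl hd K v = c * (dd s v - dd z v)) (hc : 1 ≤ c) :
    ∃ p : List A, IsArcWalk tl hd s z p ∧ p.Nodup ∧ (∀ b ∈ p, b ∈ K) ∧
      ∀ v, adiv tl hd (K - ↑p) v = (c - 1) * (dd s v - dd z v) := by
  set Φ : Set ℕ := {n | ∃ (p : List A) (y : V), p.length = n ∧ IsArcWalk tl hd s y p ∧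
    p.Nodup ∧ ∀ b ∈ p, b ∈ K} with hΦ
  have hne : 0 ∈ Φ := ⟨[], s, rfl, rfl, List.nodup_nil, by simp⟩
  have hbdd : BddAbove Φ := by
    refine ⟨Multiset.card K, fun n hn => ?_⟩
    obtain ⟨p, y, rfl, hwalk, hnd, hsub⟩ := hn
    have := Multiset.card_le_card (coe_le_of_nodup_subset hnd hsub)
    simpa using this
  have hNmem : sSup Φ ∈ Φ := Nat.sSup_mem ⟨0, hne⟩ hbdd
  obtain ⟨p, y, hlen, hwalk, hnd, hsub⟩ := hNmem
  have hple : (↑p : Multiset A) ≤ K := coe_le_of_nodup_subset hnd hsub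
  by_cases hyz : y = z
  · subst hyz
    refine ⟨p, hwalk, hnd, hsub, fun v => ?_⟩
    rw [adiv_sub hple, hdiv v, walk_adiv p s y hwalk v]
    ring
  · -- extend the walk, contradicting maximality
    exfalso
    have hext : ∃ e, e ∈ K ∧ e ∉ p ∧ tl e = y := by
      have hKeq : K = (K - ↑p) + ↑p := (tsub_add_cancel_of_le hple).symm
      by_cases hys : y = s
      · subst hys
        have hp0 : p = [] := hacyc _ _ hwalk
        subst hp0
        have h1 : (K.countP (fun a => hd a = y) : ℤ) = 0 := by
          norm_num [Multiset.countP_eq_zero]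
          intro a ha
          exact hs0 a
        have hzs : ¬ z = y := fun h => hsz (h ▸ rfl)
        have h2 : adiv tl hd K y = c := by
          rw [hdiv y]
          simp [dd, hzs]
        rw [adiv, h1] at h2
        have h3 : 0 < K.countP (fun a => tl a = y) := by omega
        obtain ⟨e, he, hte⟩ := Multiset.countP_pos.1 h3
        exact ⟨e, he, by simp, hte⟩
      · -- y ∉ {s, z}
        have hsy : ¬ s = y := fun h => hys h.symm
        have hzy : ¬ z = y := fun h => hyz h.symm
        have h2 : adiv tl hd K y = 0 := by
          rw [hdiv y]
          simp [dd, hsy, hzy]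
        have h3 : adiv tl hd (↑p) y = -1 := by
          rw [walk_adiv p s y hwalk y]
          simp [dd, hsy]
        have h4 : Multiset.countP (fun a => tl a = y) ↑p <
            Multiset.countP (fun a => tl a = y) K := by
          have hle1 : Multiset.countP (fun a => hd a = y) ↑p ≤
              Multiset.countP (fun a => hd a = y) K := Multiset.countP_le_of_le _ hple
          simp only [adiv] at h2 h3
          omega
        have h5 : 0 < Multiset.countP (fun a => tl a = y) (K - ↑p) := by
          have := congrArg (Multiset.countP (fun a => tl a = y)) hKeq
          rw [Multiset.countP_add] at this
          omega
        obtain ⟨e, he, hte⟩ := Multiset.countP_pos.1 h5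
        refine ⟨e, Multiset.mem_of_le tsub_le_self he, ?_, hte⟩
        intro hep
        have hc1 : Multiset.count e K ≤ 1 := Multiset.nodup_iff_count_le_one.1 hK e
        have hc2 : 1 ≤ Multiset.count e ↑p := Multiset.one_le_count_iff_mem.2 (by simpa using hep)
        have hc3 : 1 ≤ Multiset.count e (K - ↑p) := Multiset.one_le_count_iff_mem.2 he
        rw [Multiset.count_sub] at hc3
        omega
    obtain ⟨e, heK, hep, hte⟩ := hext
    have hnew : p.length + 1 ∈ Φ := by
      refine ⟨p ++ [e], hd e, by simp, walk_append hwalk ⟨hte, rfl⟩, ?_, ?_⟩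
      · simp [List.nodup_append, hnd, hep]
        exact fun a ha hae => hep (hae ▸ ha)
      · intro b hb
        rcases List.mem_append.1 hb with hb' | hb'
        · exact hsub b hb'
        · simp only [List.mem_singleton] at hb'
          exact hb' ▸ heK
    have := le_csSup hbdd hnew
    omega

/-- Menger for 2 paths: if there is no disjoint pair avoiding `a₀`, there is an
almost-trivial cut. -/
theorem menger_two [Fintype A] (hacyc : Acyclic tl hd) {s z : V}
    (hs0 : ∀ e : A, hd e ≠ s) (hsz : s ≠ z) (a₀ : A)
    (hno : ¬ ∃ P₁ P₂ : List A, IsArcWalk tl hd s z P₁ ∧ IsArcWalk tl hd s z P₂ ∧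
      (∀ a ∈ P₁, a ∉ P₂) ∧ a₀ ∉ P₁ ∧ a₀ ∉ P₂) :
    ∃ U : Set V, z ∈ U ∧ s ∉ U ∧ {b | b ≠ a₀ ∧ tl b ∉ U ∧ hd b ∈ U}.ncard ≤ 1 := by
  by_cases hP : ∃ p, IsArcWalk tl hd s z p ∧ ∀ b ∈ p, b ≠ a₀
  · obtain ⟨P, hPwalk, hPa₀⟩ := hP
    have hPnd : P.Nodup := walk_nodup hacyc hPwalk
    set R : Set V := {v | ∃ l, IsResWalk tl hd P a₀ s l v} with hR
    have hsR : s ∈ R := ⟨[], rfl⟩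
    have hfwdcl : ∀ b : A, b ∉ P → b ≠ a₀ → tl b ∈ R → hd b ∈ R := by
      rintro b hb1 hb2 ⟨l, hl⟩
      exact ⟨l ++ [(b, true)], resWalk_append hl ⟨hb1, hb2, rfl, rfl⟩⟩
    have hbwdcl : ∀ b : A, b ∈ P → hd b ∈ R → tl b ∈ R := by
      rintro b hb ⟨l, hl⟩
      exact ⟨l ++ [(b, false)], resWalk_append hl ⟨hb, rfl, rfl⟩⟩
    have hzR : z ∉ R := by
      rintro ⟨l₀, hl₀⟩
      obtain ⟨l, hl, hlvis, -, -⟩ := resWalk_shorten l₀.length l₀ s z le_rfl hl₀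
      have hlarcs := resWalk_arcs_nodup hl hlvis
      obtain ⟨hstep1, hstep2⟩ := resWalk_step_conds hl
      have hPnodup : (↑P : Multiset A).Nodup := by simpa using hPnd
      obtain ⟨K', hK'nd, hK'mem, hK'div⟩ := augment l s (↑P) z hl hlarcs hPnodup
        (fun b hb hbK => (hstep1 b hb).1 (by simpa using hbK))
        (fun b hb => by simpa using hstep2 b hb)
      have ha₀K' : a₀ ∉ K' := by
        intro hmem
        rcases hK'mem a₀ hmem with h' | h'
        · exact hPa₀ a₀ (by simpa using h') rfl
        · exact (hstep1 a₀ h').2 rfl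
      have hdiv2 : ∀ v, adiv tl hd K' v = 2 * (dd s v - dd z v) := by
        intro v
        rw [hK'div v, walk_adiv P s z hPwalk v]
        ring
      obtain ⟨p₁, hp₁walk, hp₁nd, hp₁sub, hp₁div⟩ :=
        extract_path hacyc hs0 hsz K' hK'nd hdiv2 (by norm_num)
      have hK''le : (K' - ↑p₁) ≤ K' := tsub_le_self
      have hK''nd : (K' - ↑p₁).Nodup := Multiset.nodup_of_le hK''le hK'nd
      have hp₁div' : ∀ v, adiv tl hd (K' - ↑p₁) v = (1 : ℤ) * (dd s v - dd z v) := by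
        intro v
        rw [hp₁div v]
        norm_num
      obtain ⟨p₂, hp₂walk, hp₂nd, hp₂sub, -⟩ :=
        extract_path hacyc hs0 hsz (K' - ↑p₁) hK''nd hp₁div' le_rfl
      refine hno ⟨p₁, p₂, hp₁walk, hp₂walk, ?_, ?_, ?_⟩
      · intro a ha hb
        have ha' : a ∈ K' - ↑p₁ := hp₂sub a hb
        have hc1 : Multiset.count a K' ≤ 1 := Multiset.nodup_iff_count_le_one.1 hK'nd a
        have hc2 : 1 ≤ Multiset.count a ↑p₁ := Multiset.one_le_count_iff_mem.2 (by simpa using ha)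
        have hc3 : 1 ≤ Multiset.count a (K' - ↑p₁) := Multiset.one_le_count_iff_mem.2 ha'
        rw [Multiset.count_sub] at hc3
        omega
      · exact fun hmem => ha₀K' (hp₁sub a₀ hmem)
      · exact fun hmem => ha₀K' (Multiset.mem_of_le hK''le (hp₂sub a₀ hmem))
    refine ⟨{v | v ∉ R}, hzR, fun hs => hs hsR, ?_⟩
    have hcrossP : ∀ b : A, b ≠ a₀ → tl b ∈ R → hd b ∉ R → b ∈ P := by
      intro b hb1 hb2 hb3
      by_contra hbP
      exact hb3 (hfwdcl b hbP hb1 hb2)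
    -- at most one arc of P crosses from R to its complement
    have haux : ∀ (c d : A) (q₁ q₂ : List A), P = q₁ ++ c :: q₂ → d ∈ q₂ →
        hd c ∉ R → tl d ∈ R → False := by
      intro c d q₁ q₂ hPeq hd2 hc1 hd1
      obtain ⟨m, hm1, hm2⟩ := walk_split (hPeq ▸ hPwalk)
      obtain ⟨q₅, q₆, rfl⟩ := List.append_of_mem hd2
      obtain ⟨m', hm'1, hm'2⟩ := walk_split hm2.2
      have hm'd : m' = tl d := hm'2.1.symm
      subst hm'd
      obtain ⟨e, he1, he2, he3⟩ := walk_crossing (W := R) hm'1 hc1 hd1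
      have heP : e ∈ P := by
        rw [hPeq]
        simp [he1]
      exact he2 (hbwdcl e heP he3)
    have hsub : Set.Subsingleton {b : A | b ≠ a₀ ∧ tl b ∉ {v | v ∉ R} ∧ hd b ∈ {v | v ∉ R}} := by
      intro c hc d hd'
      simp only [Set.mem_setOf_eq, not_not] at hc hd'
      obtain ⟨hc1, hc2, hc3⟩ := hc
      obtain ⟨hd1, hd2, hd3⟩ := hd'
      by_contra hcd
      have hcP : c ∈ P := hcrossP c hc1 hc2 hc3
      have hdP : d ∈ P := hcrossP d hd1 hd2 hd3
      obtain ⟨q₁, q₂, hPeq⟩ := List.append_of_mem hcP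
      have hdmem : d ∈ q₁ ∨ d ∈ q₂ := by
        have := hPeq ▸ hdP
        simp only [List.mem_append, List.mem_cons] at this
        rcases this with h' | h' | h'
        · exact Or.inl h'
        · exact absurd h'.symm hcd
        · exact Or.inr h'
      rcases hdmem with hdm | hdm
      · obtain ⟨q₃, q₄, rfl⟩ := List.append_of_mem hdm
        have hPeq' : P = q₃ ++ d :: (q₄ ++ c :: q₂) := by simp [hPeq]
        exact haux d c q₃ (q₄ ++ c :: q₂) hPeq' (by simp) hd3 hc2
      · exact haux c d q₁ q₂ hPeq hdm hc3 hd2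
    rcases hsub.eq_empty_or_singleton with h | ⟨b, h⟩
    · rw [h]; simp
    · rw [h]; simp
  · refine ⟨{w | ¬ ∃ p, IsArcWalk tl hd s w p ∧ ∀ b ∈ p, b ≠ a₀}, hP, ?_, ?_⟩
    · intro hs
      exact hs ⟨[], rfl, by simp⟩
    · have : {b : A | b ≠ a₀ ∧ tl b ∉ {w | ¬ ∃ p, IsArcWalk tl hd s w p ∧ ∀ c ∈ p, c ≠ a₀} ∧
          hd b ∈ {w | ¬ ∃ p, IsArcWalk tl hd s w p ∧ ∀ c ∈ p, c ≠ a₀}} = ∅ := by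
        ext b
        simp only [Set.mem_setOf_eq, not_not, Set.mem_empty_iff_false, iff_false]
        rintro ⟨hb1, ⟨p, hp1, hp2⟩, hb3⟩
        refine hb3 ⟨p ++ [b], walk_append hp1 ⟨rfl, rfl⟩, ?_⟩
        intro c hc
        rcases List.mem_append.1 hc with hc' | hc'
        · exact hp2 c hc'
        · simp only [List.mem_singleton] at hc'
          exact hc' ▸ hb1
      rw [this]
      simp

end Flows

section Cuts

open scoped Classical

variable {tl hd : A → V}

theorem cut_lower [Fintype A] {s t : V} (hst : s ≠ t) (h2 : 2 ≤ lam tl hd s t)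
    {U : Set V} (htU : t ∈ U) (hsU : s ∉ U) : 2 ≤ cutVal tl hd U := by
  obtain ⟨P₁, P₂, h1, h2', hdis⟩ := exists_pair_of_two_le_lam hst h2
  obtain ⟨e₁, he₁, he₁'⟩ := walk_crossing h1 hsU htU
  obtain ⟨e₂, he₂, he₂'⟩ := walk_crossing h2' hsU htU
  have hne : e₁ ≠ e₂ := by
    rintro rfl
    exact hdis e₁ he₁ he₂
  have hsub : ({e₁, e₂} : Set A) ⊆ {a | tl a ∉ U ∧ hd a ∈ U} := by
    rintro c (rfl | rfl)
    · exact he₁'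
    · exact he₂'
  calc 2 = ({e₁, e₂} : Set A).ncard := (Set.ncard_pair hne).symm
    _ ≤ _ := Set.ncard_le_ncard hsub (Set.toFinite _)

theorem cut_submod [Fintype A] (X Y : Set V) :
    cutVal tl hd (X ∩ Y) + cutVal tl hd (X ∪ Y) ≤ cutVal tl hd X + cutVal tl hd Y := by
  have conv : ∀ p : A → Prop, {a | p a}.ncard = ∑ a : A, if p a then 1 else 0 := by
    intro p
    rw [Set.ncard_eq_toFinset_card', Set.toFinset_setOf, Finset.card_filter]
  simp only [cutVal, conv]
  rw [← Finset.sum_add_distrib, ← Finset.sum_add_distrib]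
  refine Finset.sum_le_sum fun a _ => ?_
  by_cases h1 : tl a ∈ X <;> by_cases h2 : tl a ∈ Y <;>
    by_cases h3 : hd a ∈ X <;> by_cases h4 : hd a ∈ Y <;>
    simp [Set.mem_inter_iff, Set.mem_union, h1, h2, h3, h4]

theorem exists_three_of_ncard [Fintype A] {sA : Set A} (h : 3 ≤ sA.ncard) :
    ∃ a₁ a₂ a₃, a₁ ∈ sA ∧ a₂ ∈ sA ∧ a₃ ∈ sA ∧ a₁ ≠ a₂ ∧ a₁ ≠ a₃ ∧ a₂ ≠ a₃ := by
  have h1 : sA.Nonempty := by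
    rw [← Set.ncard_pos (Set.toFinite _)] at *
    omega
  obtain ⟨a₁, ha₁⟩ := h1
  have h2 : 2 ≤ (sA \ {a₁}).ncard := by
    rw [Set.ncard_diff_singleton_of_mem ha₁]
    omega
  have h2' : (sA \ {a₁}).Nonempty := by
    rw [← Set.ncard_pos (Set.toFinite _)]
    omega
  obtain ⟨a₂, ha₂⟩ := h2'
  have h3 : 1 ≤ ((sA \ {a₁}) \ {a₂}).ncard := by
    rw [Set.ncard_diff_singleton_of_mem ha₂]
    omega
  have h3' : ((sA \ {a₁}) \ {a₂}).Nonempty := by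
    rw [← Set.ncard_pos (Set.toFinite _)]
    omega
  obtain ⟨a₃, ha₃⟩ := h3'
  refine ⟨a₁, a₂, a₃, ha₁, ha₂.1, ha₃.1.1, ?_, ?_, ?_⟩
  · rintro rfl; simpa using ha₂.2
  · rintro rfl; simpa using ha₃.1.2
  · rintro rfl; simpa using ha₃.2

/-- no node has in-degree 3 or more in a 2-minimal acyclic network -/
theorem no_three_inarcs [Fintype A] {s : V} {T : Set V} (hsT : s ∉ T)
    (hacyc : Acyclic tl hd) (hmin : TwoMinimal tl hd s T) {v : V} {a₁ a₂ a₃ : A}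
    (h12 : a₁ ≠ a₂) (h13 : a₁ ≠ a₃) (h23 : a₂ ≠ a₃)
    (hh1 : hd a₁ = v) (hh2 : hd a₂ = v) (hh3 : hd a₃ = v) : False := by
  have hs0 : ∀ e : A, hd e ≠ s := no_head_s hsT hacyc hmin
  have getCut : ∀ a : A, hd a = v → ∃ (t : V) (U : Set V), t ∈ T ∧ t ∈ U ∧ s ∉ U ∧
      cutVal tl hd U ≤ 2 ∧ tl a ∉ U ∧ v ∈ U := by
    intro a ha
    obtain ⟨t, htT, hlt⟩ := hmin.2 a
    have hts : s ≠ t := fun h => hsT (h ▸ htT)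
    have hno : ¬ ∃ P₁ P₂ : List A, IsArcWalk tl hd s t P₁ ∧ IsArcWalk tl hd s t P₂ ∧
        (∀ b ∈ P₁, b ∉ P₂) ∧ a ∉ P₁ ∧ a ∉ P₂ := by
      rintro ⟨P₁, P₂, w1, w2, dis, n1, n2⟩
      have := two_le_lam_del_of_pair a hts w1 w2 dis n1 n2
      omega
    obtain ⟨U, htU, hsU, hsmall⟩ := menger_two hacyc hs0 hts a hno
    have hsubins : {b : A | tl b ∉ U ∧ hd b ∈ U} ⊆
        insert a {b : A | b ≠ a ∧ tl b ∉ U ∧ hd b ∈ U} := by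
      intro b hb
      by_cases hba : b = a
      · exact Or.inl hba
      · exact Or.inr ⟨hba, hb⟩
    have hcutle : cutVal tl hd U ≤ 2 := by
      calc cutVal tl hd U ≤ (insert a {b : A | b ≠ a ∧ tl b ∉ U ∧ hd b ∈ U}).ncard :=
            Set.ncard_le_ncard hsubins (Set.toFinite _)
        _ ≤ {b : A | b ≠ a ∧ tl b ∉ U ∧ hd b ∈ U}.ncard + 1 := Set.ncard_insert_le _ _
        _ ≤ 2 := by omega
    have hcutge : 2 ≤ cutVal tl hd U := cut_lower hts (hmin.1 t htT) htU hsU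
    have hcross : tl a ∉ U ∧ hd a ∈ U := by
      by_contra hcon
      have hsub2 : {b : A | tl b ∉ U ∧ hd b ∈ U} ⊆ {b : A | b ≠ a ∧ tl b ∉ U ∧ hd b ∈ U} := by
        intro b hb
        refine ⟨?_, hb⟩
        rintro rfl
        exact hcon hb
      have := Set.ncard_le_ncard hsub2 (Set.toFinite _)
      have : cutVal tl hd U ≤ 1 := le_trans this hsmall
      omega
    exact ⟨t, U, htT, htU, hsU, hcutle, hcross.1, ha ▸ hcross.2⟩
  obtain ⟨t₁, U₁, ht₁T, ht₁U, hsU₁, hc₁, htl₁, hv₁⟩ := getCut a₁ hh1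
  obtain ⟨t₂, U₂, ht₂T, ht₂U, hsU₂, hc₂, htl₂, hv₂⟩ := getCut a₂ hh2
  obtain ⟨t₃, U₃, ht₃T, ht₃U, hsU₃, hc₃, htl₃, hv₃⟩ := getCut a₃ hh3
  have hts₁ : s ≠ t₁ := fun h => hsT (h ▸ ht₁T)
  have hts₃ : s ≠ t₃ := fun h => hsT (h ▸ ht₃T)
  have hU12 : 2 ≤ cutVal tl hd (U₁ ∪ U₂) :=
    cut_lower hts₁ (hmin.1 t₁ ht₁T) (Or.inl ht₁U) (fun h => h.elim hsU₁ hsU₂)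
  have hU123 : 2 ≤ cutVal tl hd ((U₁ ∩ U₂) ∪ U₃) :=
    cut_lower hts₃ (hmin.1 t₃ ht₃T) (Or.inr ht₃U) (fun h => h.elim (fun h' => hsU₁ h'.1) hsU₃)
  have sub1 := cut_submod (tl := tl) (hd := hd) U₁ U₂
  have sub2 := cut_submod (tl := tl) (hd := hd) (U₁ ∩ U₂) U₃
  have hbig : 3 ≤ cutVal tl hd (U₁ ∩ U₂ ∩ U₃) := by
    have hsub : ({a₁, a₂, a₃} : Set A) ⊆ {a | tl a ∉ U₁ ∩ U₂ ∩ U₃ ∧ hd a ∈ U₁ ∩ U₂ ∩ U₃} := by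
      rintro c (rfl | rfl | rfl)
      · exact ⟨fun h => htl₁ h.1.1, hh1 ▸ ⟨⟨hv₁, hv₂⟩, hv₃⟩⟩
      · exact ⟨fun h => htl₂ h.1.2, hh2 ▸ ⟨⟨hv₁, hv₂⟩, hv₃⟩⟩
      · exact ⟨fun h => htl₃ h.2, hh3 ▸ ⟨⟨hv₁, hv₂⟩, hv₃⟩⟩
    have h3 : ({a₁, a₂, a₃} : Set A).ncard = 3 := by
      rw [Set.ncard_insert_of_notMem (by simp [h12, h13]) (Set.toFinite _),
        Set.ncard_insert_of_notMem (by simp [h23]) (Set.toFinite _), Set.ncard_singleton]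
    calc 3 = ({a₁, a₂, a₃} : Set A).ncard := h3.symm
      _ ≤ _ := Set.ncard_le_ncard hsub (Set.toFinite _)
  omega

end Cuts


/-- in a 2-minimal acyclic multicast network every class of the
subtree decomposition is an out-tree rooted at a unique node, which is either the
source or a node of in-degree 2; in particular no class contains two arcs entering a
common node. -/
theorem subtree_classes_are_outTrees
    {V A : Type} [Fintype V] [Fintype A] (tl hd : A → V) (s : V) (T : Set V)
    (hsT : s ∉ T) (hacyc : Acyclic tl hd) (hmin : TwoMinimal tl hd s T) :
    ∀ x : Subtrees tl hd,
      ∃! r : V, (r = s ∨ inDeg hd r = 2) ∧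
        IsOutTree tl hd r {a : A | Quot.mk (SubtreeRel tl hd) a = x} := by

  classical
  intro x
  have hs0 : ∀ e : A, hd e ≠ s := no_head_s hsT hacyc hmin
  have w : WellFounded (SubtreeRel tl hd) := subtreeRel_wf hacyc
  obtain ⟨astar, rfl⟩ := Quot.exists_rep x
  set S : Set A :=
    {a : A | Quot.mk (SubtreeRel tl hd) a = Quot.mk (SubtreeRel tl hd) astar} with hSdef
  set a₀ : A := rootArc tl hd w astar with ha₀def
  set r : V := tl a₀ with hrdef
  have hmemS : ∀ b : A, b ∈ S ↔
      Quot.mk (SubtreeRel tl hd) b = Quot.mk (SubtreeRel tl hd) astar := fun b => Iff.rfl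
  have hroot_of_S : ∀ b ∈ S, rootArc tl hd w b = a₀ := by
    intro b hb
    rw [ha₀def]
    exact rootArc_of_quot_eq ((hmemS b).1 hb)
  have ha₀S : a₀ ∈ S := by
    rw [hmemS, ha₀def]
    exact rootArc_quot astar
  have hancS : ∀ b ∈ S, ∀ c ∈ anc tl hd w b, c ∈ S := by
    intro b hb c hc
    rw [hmemS]
    exact (((anc_walk (w := w) b).2 c hc).1).trans ((hmemS b).1 hb)
  have hancwalk : ∀ b ∈ S, IsArcWalk tl hd r (tl b) (anc tl hd w b) := by
    intro b hb
    have h := (anc_walk (w := w) b).1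
    rwa [hroot_of_S b hb, ← hrdef] at h
  have hC1 : ∀ b ∈ S, hd b ≠ r := by
    intro b hb heq
    have hw2 : IsArcWalk tl hd r r (anc tl hd w b ++ [b]) :=
      walk_append (hancwalk b hb) ⟨rfl, heq⟩
    simpa using hacyc r _ hw2
  have ha₀mem : ∀ b ∈ S, ∀ (p : List A) (z : V), IsArcWalk tl hd s z p → b ∈ p → a₀ ∈ p := by
    intro b hb p z hwp hbp
    obtain ⟨q, rest, rfl⟩ := List.append_of_mem hbp
    obtain ⟨W, hq, -⟩ := anc_containment (w := w) hs0 b q rest z hwp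
    have hroot : a₀ ∈ anc tl hd w b ++ [b] := by
      have h := rootArc_mem (w := w) b
      rwa [hroot_of_S b hb] at h
    rcases List.mem_append.1 hroot with h | h
    · exact List.mem_append.2 (Or.inl (hq ▸ List.mem_append.2 (Or.inr h)))
    · simp only [List.mem_singleton] at h
      exact List.mem_append.2 (Or.inr (h ▸ List.mem_cons_self))
  have hC3 : Set.InjOn hd S := by
    intro b₁ hb₁ b₂ hb₂ hbeq
    by_contra hne
    have hdeg2 : 2 ≤ inDeg hd (hd b₂) := two_le_inDeg (fun h => hne h) hbeq rfl
    have hnochild : b₂ ∉ anc tl hd w b₁ := by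
      intro hmem
      obtain ⟨-, d, hd'⟩ := (anc_walk (w := w) b₁).2 b₂ hmem
      have h1 : inDeg hd (hd b₂) = 1 := hd'.2
      omega
    have hreroute : ∀ (t : V) (X Y : List A), IsArcWalk tl hd s t X → IsArcWalk tl hd s t Y →
        (∀ a ∈ X, a ∉ Y) → b₂ ∈ Y →
        ∃ Y', IsArcWalk tl hd s t Y' ∧ (∀ a ∈ X, a ∉ Y') ∧ b₂ ∉ Y' ∧ b₂ ∉ X := by
      intro t X Y hX hY hdis hb₂Y
      have hb₂X : b₂ ∉ X := fun h => hdis b₂ h hb₂Y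
      obtain ⟨q, rest, rfl⟩ := List.append_of_mem hb₂Y
      obtain ⟨W, hq, hWwalk⟩ := anc_containment (w := w) hs0 b₂ q rest t hY
      rw [hroot_of_S b₂ hb₂, ← hrdef] at hWwalk
      obtain ⟨m, hqw, hrw⟩ := walk_split hY
      have hm : m = tl b₂ := hrw.1.symm
      subst hm
      have hrest : IsArcWalk tl hd (hd b₂) t rest := hrw.2
      refine ⟨W ++ (anc tl hd w b₁ ++ b₁ :: rest), ?_, ?_, ?_, hb₂X⟩
      · refine walk_append hWwalk (walk_append (hancwalk b₁ hb₁) ⟨rfl, ?_⟩)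
        rw [hbeq]
        exact hrest
      · intro a haX haY'
        rcases List.mem_append.1 haY' with hW' | hrest'
        · exact hdis a haX
            (List.mem_append.2 (Or.inl (hq ▸ List.mem_append.2 (Or.inl hW'))))
        · rcases List.mem_append.1 hrest' with hanc | hcons
          · have haS : a ∈ S := hancS b₁ hb₁ a hanc
            exact hdis a₀ (ha₀mem a haS X t hX haX) (ha₀mem b₂ hb₂ _ t hY hb₂Y)
          · rcases List.mem_cons.1 hcons with heqa | hrest''
            · have haS : a ∈ S := by rw [heqa]; exact hb₁
              exact hdis a₀ (ha₀mem a haS X t hX haX) (ha₀mem b₂ hb₂ _ t hY hb₂Y)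
            · exact hdis a haX (List.mem_append.2 (Or.inr (List.mem_cons_of_mem _ hrest'')))
      · have hnd : (q ++ b₂ :: rest).Nodup := walk_nodup hacyc hY
        have hdisj := List.disjoint_of_nodup_append hnd
        intro hmem
        rcases List.mem_append.1 hmem with hW' | hmem'
        · exact hdisj (hq ▸ List.mem_append.2 (Or.inl hW')) (List.mem_cons_self)
        · rcases List.mem_append.1 hmem' with hanc | hcons
          · exact hnochild hanc
          · rcases List.mem_cons.1 hcons with heqq | hrest''
            · exact hne heqq.symm
            · exact (List.Nodup.notMem (List.Nodup.of_append_right hnd)) hrest''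
    refine keyHelper hsT hmin b₂ (fun t htT P₁ P₂ w1 w2 dis => ?_)
    by_cases hP2 : b₂ ∈ P₂
    · obtain ⟨Y', hY'w, hY'dis, hY'b₂, hb₂P₁⟩ := hreroute t P₁ P₂ w1 w2 dis hP2
      exact ⟨P₁, Y', w1, hY'w, hY'dis, hb₂P₁, hY'b₂⟩
    · by_cases hP1 : b₂ ∈ P₁
      · have dis' : ∀ a ∈ P₂, a ∉ P₁ := fun a ha hb => dis a hb ha
        obtain ⟨Y', hY'w, hY'dis, hY'b₂, hb₂P₂⟩ := hreroute t P₂ P₁ w2 w1 dis' hP1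
        exact ⟨Y', P₂, hY'w, w2, fun a ha hb => hY'dis a hb ha, hY'b₂, hb₂P₂⟩
      · exact ⟨P₁, P₂, w1, w2, dis, hP1, hP2⟩
  have hC2 : ∀ a ∈ S, ∃ p : List A, (∀ b ∈ p, b ∈ S) ∧ IsArcWalk tl hd r (tl a) p :=
    fun a ha => ⟨anc tl hd w a, hancS a ha, hancwalk a ha⟩
  have hOT : IsOutTree tl hd r S := ⟨hC1, hC3, hC2⟩
  have hcond : r = s ∨ inDeg hd r = 2 := by
    have hne1 : inDeg hd r ≠ 1 := by
      rw [hrdef, ha₀def]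
      exact inDeg_tl_rootArc_ne_one (w := w) astar
    by_cases h0 : inDeg hd r = 0
    · left
      by_contra hrs
      obtain ⟨p, hp⟩ := tail_reachable hsT hacyc hmin a₀
      rw [← hrdef] at hp
      have hpne : p ≠ [] := walk_ne_nil hp (fun h => hrs h.symm)
      obtain ⟨q, e, -, -, he⟩ := walk_last hp hpne
      have := inDeg_pos_of_head (v := r) he
      omega
    · by_cases h2 : inDeg hd r = 2
      · right; exact h2
      · exfalso
        have h3 : 3 ≤ inDeg hd r := by omega
        obtain ⟨b₁, b₂, b₃, hb₁, hb₂, hb₃, h12, h13, h23⟩ :=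
          exists_three_of_ncard (sA := {a : A | hd a = r}) h3
        exact no_three_inarcs hsT hacyc hmin h12 h13 h23 hb₁ hb₂ hb₃
  refine ⟨r, ⟨hcond, hOT⟩, ?_⟩
  rintro r' ⟨-, hOT1', hOT2', hOT3'⟩
  obtain ⟨p, hpS, hpw⟩ := hOT3' a₀ ha₀S
  rw [← hrdef] at hpw
  by_cases hpnil : p = []
  · subst hpnil
    exact hpw
  · exfalso
    obtain ⟨q, e, heq, -, he⟩ := walk_last hpw hpnil
    have heS : e ∈ S := hpS e (heq ▸ (List.mem_append.2 (Or.inr (List.mem_cons_self))))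
    exact (hC1 e heS) he

end NCMinor
end
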